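/- arXiv:2102.01635 — 5 statements merged into one kernel-verified Lean document; each statement's English description precedes it below -/
import Mathlib

section
/- Let ε > 0, 0 < α ≤ β, q ∈ [0,1], let N ≥ 1 and k be natural numbers with k ≤ N, and let a, b ∈ ℝ satisfy ε/β ≤ a ≤ ε/α, a + b ≥ ε/β, and |b| ≤ ε·q·(1/α − 1/β). Set H := Nε and θ := k/N. Then Na + kb > 0, Na + b > 0, and | H/(Na + kb) − ( (1 − k)·H/(Na) + k·H/(Na + b) ) | ≤ q² β³ (1/α − 1/β)² ( (ε/H)·θ + 2θ² ). -/
set_option maxHeartbeats 1000000 in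
/-- Algebraic core of the 1D consistency error theorem: difference between the
harmonic mean of the sample coefficient with `k` defects and the linear
combination of the offline harmonic means. -/
theorem stmt_2 (ε α β q a b : ℝ) (N k : ℕ)
    (hε : 0 < ε) (hα : 0 < α) (hαβ : α ≤ β)
    (hq0 : 0 ≤ q) (hq1 : q ≤ 1) (hN : 1 ≤ N) (hk : k ≤ N)
    (ha1 : ε / β ≤ a) (ha2 : a ≤ ε / α)
    (hab : ε / β ≤ a + b)
    (hb : |b| ≤ ε * q * (1 / α - 1 / β)) :
    let H : ℝ := (N : ℝ) * ε
    let θ : ℝ := (k : ℝ) / (N : ℝ)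
    0 < (N : ℝ) * a + (k : ℝ) * b ∧ 0 < (N : ℝ) * a + b ∧
    |H / ((N : ℝ) * a + (k : ℝ) * b)
        - ((1 - (k : ℝ)) * H / ((N : ℝ) * a) + (k : ℝ) * H / ((N : ℝ) * a + b))|
      ≤ q ^ 2 * β ^ 3 * (1 / α - 1 / β) ^ 2 * ((ε / H) * θ + 2 * θ ^ 2) := by
  intro H θ
  have hβ : 0 < β := lt_of_lt_of_le hα hαβ
  have hN1 : (1:ℝ) ≤ (N:ℝ) := by exact_mod_cast hN
  have hNpos : (0:ℝ) < (N:ℝ) := by linarith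
  have hkN : (k:ℝ) ≤ (N:ℝ) := by exact_mod_cast hk
  have hk0 : (0:ℝ) ≤ (k:ℝ) := Nat.cast_nonneg k
  have hc0 : 0 ≤ 1/α - 1/β := by
    have := one_div_le_one_div_of_le hα hαβ
    linarith
  set c : ℝ := 1/α - 1/β with hc
  have hd0pos : 0 < (N:ℝ) * (ε/β) := by positivity
  -- the three denominators are bounded below by N ε / β
  have hA : (N:ℝ) * (ε/β) ≤ (N:ℝ) * a :=
    mul_le_mul_of_nonneg_left ha1 hNpos.le
  have hAb : (N:ℝ) * (ε/β) ≤ (N:ℝ) * a + b := by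
    nlinarith [mul_nonneg (sub_nonneg.2 hN1) (sub_nonneg.2 ha1)]
  have hAkb : (N:ℝ) * (ε/β) ≤ (N:ℝ) * a + (k:ℝ) * b := by
    nlinarith [mul_nonneg (sub_nonneg.2 hkN) (sub_nonneg.2 ha1),
      mul_nonneg hk0 (sub_nonneg.2 hab)]
  have hApos : 0 < (N:ℝ) * a := lt_of_lt_of_le hd0pos hA
  have hAbpos : 0 < (N:ℝ) * a + b := lt_of_lt_of_le hd0pos hAb
  have hAkbpos : 0 < (N:ℝ) * a + (k:ℝ) * b := lt_of_lt_of_le hd0pos hAkb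
  refine ⟨hAkbpos, hAbpos, ?_⟩
  have hHdef : H = (N:ℝ) * ε := rfl
  have hθdef : θ = (k:ℝ) / (N:ℝ) := rfl
  -- key exact identity for the difference
  have hkey : H / ((N : ℝ) * a + (k : ℝ) * b)
        - ((1 - (k : ℝ)) * H / ((N : ℝ) * a) + (k : ℝ) * H / ((N : ℝ) * a + b))
      = ((k:ℝ) * ((k:ℝ) - 1) * b^2 * H)
        / (((N:ℝ) * a) * ((N:ℝ) * a + b) * ((N:ℝ) * a + (k:ℝ) * b)) := by
    rw [hHdef]
    have ha0 : a ≠ 0 := fun h => by simp [h] at hApos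
    field_simp
    ring
  have hkk0 : (0:ℝ) ≤ (k:ℝ) * ((k:ℝ) - 1) := by
    rcases Nat.eq_zero_or_pos k with h | h
    · simp [h]
    · have h1 : (1:ℝ) ≤ (k:ℝ) := by exact_mod_cast h
      nlinarith
  have hnum0 : (0:ℝ) ≤ (k:ℝ) * ((k:ℝ) - 1) * b^2 * H := by
    rw [hHdef]; positivity
  have hDpos : 0 < ((N:ℝ) * a) * ((N:ℝ) * a + b) * ((N:ℝ) * a + (k:ℝ) * b) := by
    positivity
  rw [hkey, abs_of_nonneg (div_nonneg hnum0 hDpos.le)]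
  have hd03pos : 0 < ((N:ℝ) * (ε/β))^3 := by positivity
  have hD : ((N:ℝ) * (ε/β))^3
      ≤ ((N:ℝ) * a) * ((N:ℝ) * a + b) * ((N:ℝ) * a + (k:ℝ) * b) := by
    have h1 : ((N:ℝ) * (ε/β)) * ((N:ℝ) * (ε/β)) ≤ ((N:ℝ) * a) * ((N:ℝ) * a + b) :=
      mul_le_mul hA hAb hd0pos.le hApos.le
    have h2 : (((N:ℝ) * (ε/β)) * ((N:ℝ) * (ε/β))) * ((N:ℝ) * (ε/β))
        ≤ (((N:ℝ) * a) * ((N:ℝ) * a + b)) * ((N:ℝ) * a + (k:ℝ) * b) :=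
      mul_le_mul h1 hAkb hd0pos.le (by positivity)
    calc ((N:ℝ) * (ε/β))^3 = (((N:ℝ) * (ε/β)) * ((N:ℝ) * (ε/β))) * ((N:ℝ) * (ε/β)) := by ring
      _ ≤ _ := h2
  have hb2 : b^2 ≤ ε^2 * q^2 * c^2 := by
    have h := abs_le.mp hb
    nlinarith [mul_nonneg (by linarith [h.1] : (0:ℝ) ≤ b + ε * q * c)
      (by linarith [h.2] : (0:ℝ) ≤ ε * q * c - b)]
  calc ((k:ℝ) * ((k:ℝ) - 1) * b^2 * H)
        / (((N:ℝ) * a) * ((N:ℝ) * a + b) * ((N:ℝ) * a + (k:ℝ) * b))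
      ≤ ((k:ℝ) * ((k:ℝ) - 1) * b^2 * H) / ((N:ℝ) * (ε/β))^3 :=
        div_le_div_of_nonneg_left hnum0 hd03pos hD
    _ ≤ q ^ 2 * β ^ 3 * c ^ 2 * ((ε / H) * θ + 2 * θ ^ 2) := by
        rw [hHdef, hθdef]
        rw [div_le_iff₀ hd03pos]
        have hkk2 : (k:ℝ) * ((k:ℝ) - 1) ≤ (k:ℝ) + 2 * (k:ℝ)^2 := by nlinarith
        have hεN : ε ≠ 0 := hε.ne'
        have hNne : (N:ℝ) ≠ 0 := hNpos.ne'
        have key : q ^ 2 * β ^ 3 * c ^ 2 * ((ε / ((N:ℝ)*ε)) * ((k:ℝ)/(N:ℝ))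
              + 2 * ((k:ℝ)/(N:ℝ)) ^ 2) * ((N:ℝ) * (ε/β))^3
            = ((k:ℝ) + 2 * (k:ℝ)^2) * (ε^2 * q^2 * c^2) * ((N:ℝ) * ε) := by
          field_simp
        rw [key]
        have hstep1 : (k:ℝ) * ((k:ℝ) - 1) * b^2 ≤ ((k:ℝ) + 2*(k:ℝ)^2) * (ε^2 * q^2 * c^2) := by
          nlinarith [mul_le_mul_of_nonneg_left hb2 hkk0,
            mul_nonneg (mul_nonneg (mul_nonneg (sq_nonneg ε) (sq_nonneg q)) (sq_nonneg c))
              (by nlinarith : (0:ℝ) ≤ (k:ℝ) + 2*(k:ℝ)^2 - (k:ℝ) * ((k:ℝ) - 1))]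
        calc (k:ℝ) * ((k:ℝ) - 1) * b^2 * ((N:ℝ) * ε)
            ≤ ((k:ℝ) + 2*(k:ℝ)^2) * (ε^2 * q^2 * c^2) * ((N:ℝ) * ε) :=
              mul_le_mul_of_nonneg_right hstep1 (by positivity)
          _ = _ := rfl
end

section
/- Let N ≥ 1 be a natural number, S ⊆ {0,…,N−1} a defect set of cardinality k, H := Nε, θ := k/N, and let A be the associated sample coefficient on [0,H]. Define the harmonic mean A_harm := H / ∫_0^H (1/A(x)) dx and the combined offline harmonic mean A_harm^μ := (1−k)·H/(N·Ā) + k·H/(N·Ā + Ā_def). Then |A_harm − A_harm^μ| ≤ |Q|² β³ (1/α − 1/β)² ( (ε/H)·θ + 2θ² ). -/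
open MeasureTheory intervalIntegral

set_option maxHeartbeats 1000000 in
/-- One-dimensional consistency error bound for the harmonic means: the
harmonic mean of a sample coefficient with `k` defects is close to the
combined offline harmonic mean. -/
theorem stmt_7 (α β ε q₀ q₁ : ℝ) (Aper Bper : ℝ → ℝ)
    (hα : 0 < α) (hαβ : α ≤ β) (hε : 0 < ε)
    (hAmeas : Measurable Aper) (hBmeas : Measurable Bper)
    (hAper : Function.Periodic Aper 1) (hBper : Function.Periodic Bper 1)
    (hAbd : ∀ y, α ≤ Aper y ∧ Aper y ≤ β)
    (hABbd : ∀ y, α ≤ Aper y + Bper y ∧ Aper y + Bper y ≤ β)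
    (hq0 : 0 ≤ q₀) (hq01 : q₀ ≤ q₁) (hq1 : q₁ ≤ 1)
    (N : ℕ) (hN : 1 ≤ N) (S : Finset ℕ) (hS : S ⊆ Finset.range N)
    (A : ℝ → ℝ)
    (hAdef : ∀ x, (∃ j ∈ S, x ∈ Set.Icc (ε * ((j : ℝ) + q₀)) (ε * ((j : ℝ) + q₁)))
        → A x = Aper (x / ε) + Bper (x / ε))
    (hAout : ∀ x, ¬ (∃ j ∈ S, x ∈ Set.Icc (ε * ((j : ℝ) + q₀)) (ε * ((j : ℝ) + q₁)))
        → A x = Aper (x / ε)) :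
    let H : ℝ := (N : ℝ) * ε
    let θ : ℝ := (S.card : ℝ) / (N : ℝ)
    let Abar : ℝ := ∫ x in (0 : ℝ)..ε, 1 / Aper (x / ε)
    let Adef : ℝ := ∫ x in (ε * q₀)..(ε * q₁),
        (1 / (Aper (x / ε) + Bper (x / ε)) - 1 / Aper (x / ε))
    |H / (∫ x in (0 : ℝ)..H, 1 / A x)
        - ((1 - (S.card : ℝ)) * H / ((N : ℝ) * Abar)
            + (S.card : ℝ) * H / ((N : ℝ) * Abar + Adef))|
      ≤ (q₁ - q₀) ^ 2 * β ^ 3 * (1 / α - 1 / β) ^ 2 * ((ε / H) * θ + 2 * θ ^ 2) := by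
  intro H θ Abar Adef
  classical
  have hHdef : H = (N:ℝ)*ε := rfl
  have hθdef : θ = (S.card : ℝ)/(N:ℝ) := rfl
  have hAbardef : Abar = ∫ x in (0:ℝ)..ε, 1 / Aper (x / ε) := rfl
  have hAdefdef : Adef = ∫ x in (ε * q₀)..(ε * q₁),
      (1 / (Aper (x / ε) + Bper (x / ε)) - 1 / Aper (x / ε)) := rfl
  have hβ : 0 < β := lt_of_lt_of_le hα hαβ
  have hNpos : (0:ℝ) < (N:ℝ) := by exact_mod_cast hN
  have hH : (0:ℝ) < H := mul_pos hNpos hε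
  have hεne : ε ≠ 0 := ne_of_gt hε
  -- bounds on A itself
  have hAbd' : ∀ x, α ≤ A x ∧ A x ≤ β := by
    intro x
    by_cases hx : ∃ j ∈ S, x ∈ Set.Icc (ε * ((j : ℝ) + q₀)) (ε * ((j : ℝ) + q₁))
    · rw [hAdef x hx]; exact hABbd _
    · rw [hAout x hx]; exact hAbd _
  -- bounds for reciprocals
  have key_inv : ∀ t : ℝ, α ≤ t → t ≤ β → ((1:ℝ)/β ≤ 1/t ∧ 1/t ≤ 1/α) := by
    intro t h1 h2
    constructor
    · exact one_div_le_one_div_of_le (lt_of_lt_of_le hα h1) h2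
    · exact one_div_le_one_div_of_le hα h1
  have habs : ∀ t : ℝ, α ≤ t → t ≤ β → |1/t| ≤ 1/α := by
    intro t h1 h2
    obtain ⟨hl, hr⟩ := key_inv t h1 h2
    have : (0:ℝ) < 1/β := by positivity
    exact abs_le.mpr ⟨by linarith, hr⟩
  -- measurability of A
  have hf₁m : Measurable (fun x : ℝ => Aper (x / ε)) :=
    hAmeas.comp (measurable_id.div_const ε)
  have hf₂m : Measurable (fun x : ℝ => Aper (x / ε) + Bper (x / ε)) :=
    hf₁m.add (hBmeas.comp (measurable_id.div_const ε))
  have hAeq : A = fun x => if x ∈ {x : ℝ | ∃ j ∈ S,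
      x ∈ Set.Icc (ε * ((j : ℝ) + q₀)) (ε * ((j : ℝ) + q₁))}
      then Aper (x/ε) + Bper (x/ε) else Aper (x/ε) := by
    funext x
    by_cases hx : ∃ j ∈ S, x ∈ Set.Icc (ε * ((j : ℝ) + q₀)) (ε * ((j : ℝ) + q₁))
    · simp only [Set.mem_setOf_eq, hx, if_true]; exact hAdef x hx
    · simp only [Set.mem_setOf_eq, hx, if_false]; exact hAout x hx
  have hDmeas : MeasurableSet {x : ℝ | ∃ j ∈ S,
      x ∈ Set.Icc (ε * ((j : ℝ) + q₀)) (ε * ((j : ℝ) + q₁))} := by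
    have : {x : ℝ | ∃ j ∈ S, x ∈ Set.Icc (ε * ((j : ℝ) + q₀)) (ε * ((j : ℝ) + q₁))}
        = ⋃ j ∈ S, Set.Icc (ε * ((j : ℝ) + q₀)) (ε * ((j : ℝ) + q₁)) := by
      ext x; simp only [Set.mem_setOf_eq, Set.mem_iUnion, Set.mem_Icc, exists_prop]
    rw [this]
    exact MeasurableSet.biUnion S.countable_toSet (fun j _ => measurableSet_Icc)
  have hAm : Measurable A := by rw [hAeq]; exact Measurable.ite hDmeas hf₂m hf₁m
  -- interval integrability
  have intbdd : ∀ (f : ℝ → ℝ), Measurable f → (∀ x, |f x| ≤ 1/α) →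
      ∀ a b : ℝ, IntervalIntegrable f volume a b := by
    intro f hm hb a b
    exact (_root_.intervalIntegrable_const (c := 1/α)).mono_fun' hm.aestronglyMeasurable.restrict
      (Filter.Eventually.of_forall (fun x => by simpa [Real.norm_eq_abs] using hb x))
  have hint1 : ∀ a b : ℝ, IntervalIntegrable (fun x => 1 / Aper (x/ε)) volume a b :=
    intbdd _ (by simpa [one_div] using hf₁m)
      (fun x => habs _ (hAbd _).1 (hAbd _).2)
  have hint2 : ∀ a b : ℝ, IntervalIntegrable (fun x => 1 / (Aper (x/ε) + Bper (x/ε))) volume a b :=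
    intbdd _ (by simpa [one_div] using hf₂m)
      (fun x => habs _ (hABbd _).1 (hABbd _).2)
  have hintA : ∀ a b : ℝ, IntervalIntegrable (fun x => 1 / A x) volume a b :=
    intbdd _ (by simpa [one_div] using hAm)
      (fun x => habs _ (hAbd' _).1 (hAbd' _).2)
  -- periodic shift of integrals
  have hshift : ∀ (F : ℝ → ℝ), Function.Periodic F 1 → ∀ (j : ℕ) (a b : ℝ),
      (∫ x in (a + ε*j)..(b + ε*j), F (x/ε)) = ∫ x in a..b, F (x/ε) := by
    intro F hF j a b
    rw [← intervalIntegral.integral_comp_add_right (fun x => F (x/ε)) (ε*j)]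
    have h : ∀ x : ℝ, F ((x + ε*j)/ε) = F (x/ε) := by
      intro x
      have e : (x + ε*j)/ε = x/ε + j*1 := by field_simp
      rw [e, hF.nat_mul j (x/ε)]
    simp only [h]
  have hper1 : Function.Periodic (fun y => 1 / Aper y) 1 := fun y => by simp [hAper y]
  have hper2 : Function.Periodic (fun y => 1 / (Aper y + Bper y)) 1 := fun y => by
    simp [hAper y, hBper y]
  have hperd : Function.Periodic (fun y => 1 / (Aper y + Bper y) - 1 / Aper y) 1 := fun y => by
    simp [hAper y, hBper y]
  have hAbar_shift : ∀ j : ℕ,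
      (∫ x in (ε*(j:ℝ))..(ε*((j:ℝ)+1)), 1 / Aper (x/ε)) = Abar := by
    intro j
    have h0 : ε*(j:ℝ) = 0 + ε*j := by ring
    have h1 : ε*((j:ℝ)+1) = ε + ε*j := by ring
    rw [h0, h1]
    exact hshift (fun y => 1 / Aper y) hper1 j 0 ε
  -- disjointness: a point strictly inside cell j can only lie in defect interval j
  have hdisj : ∀ (j i : ℕ), ∀ x : ℝ, ε*(j:ℝ) < x → x < ε*((j:ℝ)+1) →
      x ∈ Set.Icc (ε*((i:ℝ)+q₀)) (ε*((i:ℝ)+q₁)) → i = j := by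
    intro j i x hx1 hx2 hmem
    obtain ⟨hm1, hm2⟩ := hmem
    by_contra hne
    rcases Nat.lt_or_ge i j with h | h
    · have hij : (i:ℝ) + 1 ≤ j := by exact_mod_cast h
      nlinarith
    · have hji : (j:ℝ) + 1 ≤ i := by
        have : j < i := lt_of_le_of_ne h (Ne.symm hne)
        exact_mod_cast this
      nlinarith
  -- congruence lemma for intervals where A agrees with Aper off the endpoints
  have hcongr : ∀ (a b : ℝ), a ≤ b → (∀ x, a < x → x < b → A x = Aper (x/ε)) →
      (∫ x in a..b, 1 / A x) = ∫ x in a..b, 1 / Aper (x/ε) := by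
    intro a b hab h
    apply intervalIntegral.integral_congr_ae
    have hb : ∀ᵐ x ∂(volume : Measure ℝ), x ≠ b := by
      rw [ae_iff]
      simpa using measure_singleton b
    filter_upwards [hb] with x hx hmem
    rw [Set.uIoc_of_le hab] at hmem
    rw [h x hmem.1 (lt_of_le_of_ne hmem.2 hx)]
  -- per-cell computation
  have hcell : ∀ j : ℕ, (∫ x in (ε*(j:ℝ))..(ε*((j:ℝ)+1)), 1 / A x)
      = Abar + (if j ∈ S then Adef else 0) := by
    intro j
    have hb0 : ε*(j:ℝ) ≤ ε*((j:ℝ)+q₀) := by nlinarith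
    have hb1 : ε*((j:ℝ)+q₀) ≤ ε*((j:ℝ)+q₁) := by nlinarith
    have hb2 : ε*((j:ℝ)+q₁) ≤ ε*((j:ℝ)+1) := by nlinarith
    by_cases hj : j ∈ S
    · -- defect cell
      have e1 : (∫ x in (ε*(j:ℝ))..(ε*((j:ℝ)+1)), 1 / A x)
          = (∫ x in (ε*(j:ℝ))..(ε*((j:ℝ)+q₀)), 1 / A x)
            + (∫ x in (ε*((j:ℝ)+q₀))..(ε*((j:ℝ)+1)), 1 / A x) :=
        (integral_add_adjacent_intervals (hintA _ _) (hintA _ _)).symm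
      have e2 : (∫ x in (ε*((j:ℝ)+q₀))..(ε*((j:ℝ)+1)), 1 / A x)
          = (∫ x in (ε*((j:ℝ)+q₀))..(ε*((j:ℝ)+q₁)), 1 / A x)
            + (∫ x in (ε*((j:ℝ)+q₁))..(ε*((j:ℝ)+1)), 1 / A x) :=
        (integral_add_adjacent_intervals (hintA _ _) (hintA _ _)).symm
      have p1 : (∫ x in (ε*(j:ℝ))..(ε*((j:ℝ)+q₀)), 1 / A x)
          = ∫ x in (ε*(j:ℝ))..(ε*((j:ℝ)+q₀)), 1 / Aper (x/ε) := by
        apply hcongr _ _ hb0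
        intro x hx1 hx2
        apply hAout
        rintro ⟨i, hi, hmem⟩
        have hx2' : x < ε*((j:ℝ)+1) := lt_of_lt_of_le hx2 (le_trans hb1 hb2)
        have := hdisj j i x hx1 hx2' hmem
        subst this
        exact absurd hmem.1 (by linarith)
      have p3 : (∫ x in (ε*((j:ℝ)+q₁))..(ε*((j:ℝ)+1)), 1 / A x)
          = ∫ x in (ε*((j:ℝ)+q₁))..(ε*((j:ℝ)+1)), 1 / Aper (x/ε) := by
        apply hcongr _ _ hb2
        intro x hx1 hx2
        apply hAout
        rintro ⟨i, hi, hmem⟩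
        have hx1' : ε*(j:ℝ) < x := lt_of_le_of_lt (by nlinarith) hx1
        have := hdisj j i x hx1' hx2 hmem
        subst this
        exact absurd hmem.2 (by linarith)
      have p2 : (∫ x in (ε*((j:ℝ)+q₀))..(ε*((j:ℝ)+q₁)), 1 / A x)
          = ∫ x in (ε*((j:ℝ)+q₀))..(ε*((j:ℝ)+q₁)), 1 / (Aper (x/ε) + Bper (x/ε)) := by
        apply intervalIntegral.integral_congr
        intro x hx
        rw [Set.uIcc_of_le hb1] at hx
        show 1 / A x = 1 / (Aper (x/ε) + Bper (x/ε))
        rw [hAdef x ⟨j, hj, hx.1, hx.2⟩]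
      have q1 : (∫ x in (ε*(j:ℝ))..(ε*((j:ℝ)+q₀)), 1 / Aper (x/ε))
            + (∫ x in (ε*((j:ℝ)+q₀))..(ε*((j:ℝ)+q₁)), 1 / Aper (x/ε))
            + (∫ x in (ε*((j:ℝ)+q₁))..(ε*((j:ℝ)+1)), 1 / Aper (x/ε)) = Abar := by
        rw [integral_add_adjacent_intervals (hint1 _ _) (hint1 _ _),
          integral_add_adjacent_intervals (hint1 _ _) (hint1 _ _)]
        exact hAbar_shift j
      have q2 : (∫ x in (ε*((j:ℝ)+q₀))..(ε*((j:ℝ)+q₁)),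
            (1 / (Aper (x/ε) + Bper (x/ε)) - 1 / Aper (x/ε))) = Adef := by
        have ha : ε*((j:ℝ)+q₀) = ε*q₀ + ε*j := by ring
        have hb : ε*((j:ℝ)+q₁) = ε*q₁ + ε*j := by ring
        rw [ha, hb]
        exact hshift (fun y => 1 / (Aper y + Bper y) - 1 / Aper y) hperd j (ε*q₀) (ε*q₁)
      have q2' : (∫ x in (ε*((j:ℝ)+q₀))..(ε*((j:ℝ)+q₁)),
            (1 / (Aper (x/ε) + Bper (x/ε)) - 1 / Aper (x/ε)))
          = (∫ x in (ε*((j:ℝ)+q₀))..(ε*((j:ℝ)+q₁)), 1 / (Aper (x/ε) + Bper (x/ε)))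
            - ∫ x in (ε*((j:ℝ)+q₀))..(ε*((j:ℝ)+q₁)), 1 / Aper (x/ε) :=
        integral_sub (hint2 _ _) (hint1 _ _)
      simp only [if_pos hj]
      rw [e1, e2, p1, p2, p3]
      linarith [q1, q2, q2']
    · -- no defect
      simp only [if_neg hj, add_zero]
      rw [hcongr _ _ (by nlinarith) ?_]
      · exact hAbar_shift j
      · intro x hx1 hx2
        apply hAout
        rintro ⟨i, hi, hmem⟩
        have := hdisj j i x hx1 hx2 hmem
        subst this
        exact hj hi
  -- sum over cells
  have hsum : (∫ x in (0:ℝ)..H, 1 / A x) = (N:ℝ)*Abar + (S.card : ℝ)*Adef := by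
    have hadj := intervalIntegral.sum_integral_adjacent_intervals (f := fun x => 1 / A x)
      (μ := volume) (a := fun k : ℕ => ε*(k:ℝ)) (n := N) (fun k _ => hintA _ _)
    have hrw : ∀ k ∈ Finset.range N, (∫ x in (ε*(k:ℝ))..(ε*(((k+1):ℕ):ℝ)), 1 / A x)
        = Abar + (if k ∈ S then Adef else 0) := by
      intro k _
      have : ((k+1 : ℕ) : ℝ) = (k:ℝ) + 1 := by push_cast; ring
      rw [this]
      exact hcell k
    rw [Finset.sum_congr rfl hrw] at hadj
    rw [Finset.sum_add_distrib, Finset.sum_const, Finset.card_range] at hadj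
    have hite : (∑ k ∈ Finset.range N, if k ∈ S then Adef else 0) = (S.card : ℝ) * Adef := by
      rw [Finset.sum_ite_mem, Finset.inter_eq_right.mpr hS, Finset.sum_const]
      simp [mul_comm]
    rw [hite] at hadj
    have e0 : (fun k : ℕ => ε*(k:ℝ)) 0 = (0:ℝ) := by norm_num
    have eN : (fun k : ℕ => ε*(k:ℝ)) N = H := by show ε*(N:ℝ) = H; rw [hHdef]; ring
    rw [Nat.cast_zero, mul_zero, show ε*(N:ℝ) = H from eN, nsmul_eq_mul] at hadj
    exact hadj.symm
  -- lower bound for constant-minorized integrals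
  have lbint : ∀ (F : ℝ → ℝ), (∀ a b, IntervalIntegrable F volume a b) →
      (∀ x, 1/β ≤ F x) → ∀ a b : ℝ, a ≤ b → (b-a)/β ≤ ∫ x in a..b, F x := by
    intro F hi hF a b hab
    have h1 := intervalIntegral.integral_mono_on (μ := volume) hab
      (_root_.intervalIntegrable_const (c := 1/β)) (hi a b) (fun x _ => hF x)
    have h2 : (∫ _x in a..b, (1/β : ℝ)) = (b-a)/β := by
      rw [intervalIntegral.integral_const, smul_eq_mul, mul_one_div]
    linarith [h1, h2]
  have hAbar_lb : ε/β ≤ Abar := by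
    have h := lbint (fun x => 1 / Aper (x/ε)) hint1
      (fun x => (key_inv _ (hAbd _).1 (hAbd _).2).1) 0 ε (le_of_lt hε)
    rw [hAbardef]
    simpa using h
  have hq0' : (0:ℝ) ≤ ε*q₀ := by positivity
  have hq1' : ε*q₀ ≤ ε*q₁ := mul_le_mul_of_nonneg_left hq01 hε.le
  have hq2' : ε*q₁ ≤ ε := by
    calc ε*q₁ ≤ ε*1 := mul_le_mul_of_nonneg_left hq1 hε.le
      _ = ε := mul_one ε
  have hsum_lb : ε/β ≤ Abar + Adef := by
    have s1 : Abar = (∫ x in (0:ℝ)..(ε*q₀), 1 / Aper (x/ε))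
        + (∫ x in (ε*q₀)..(ε*q₁), 1 / Aper (x/ε))
        + (∫ x in (ε*q₁)..ε, 1 / Aper (x/ε)) := by
      rw [integral_add_adjacent_intervals (hint1 _ _) (hint1 _ _),
        integral_add_adjacent_intervals (hint1 _ _) (hint1 _ _)]
    have s2 : Adef = (∫ x in (ε*q₀)..(ε*q₁), 1 / (Aper (x/ε) + Bper (x/ε)))
        - ∫ x in (ε*q₀)..(ε*q₁), 1 / Aper (x/ε) :=
      integral_sub (hint2 _ _) (hint1 _ _)
    have l1 := lbint (fun x => 1 / Aper (x/ε)) hint1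
      (fun x => (key_inv _ (hAbd _).1 (hAbd _).2).1) 0 (ε*q₀) hq0'
    have l2 := lbint (fun x => 1 / (Aper (x/ε) + Bper (x/ε))) hint2
      (fun x => (key_inv _ (hABbd _).1 (hABbd _).2).1) (ε*q₀) (ε*q₁) hq1'
    have l3 := lbint (fun x => 1 / Aper (x/ε)) hint1
      (fun x => (key_inv _ (hAbd _).1 (hAbd _).2).1) (ε*q₁) ε hq2'
    have : Abar + Adef = (∫ x in (0:ℝ)..(ε*q₀), 1 / Aper (x/ε))
        + (∫ x in (ε*q₀)..(ε*q₁), 1 / (Aper (x/ε) + Bper (x/ε)))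
        + (∫ x in (ε*q₁)..ε, 1 / Aper (x/ε)) := by rw [s1]; linarith [s2]
    rw [this]
    have : (ε*q₀ - 0)/β + (ε*q₁ - ε*q₀)/β + (ε - ε*q₁)/β = ε/β := by ring
    linarith
  -- bound on Adef
  have hAdef_bd : |Adef| ≤ ε*(q₁-q₀)*(1/α - 1/β) := by
    rw [hAdefdef]
    have hptw : ∀ x ∈ Set.uIoc (ε*q₀) (ε*q₁),
        ‖(1 / (Aper (x/ε) + Bper (x/ε)) - 1 / Aper (x/ε))‖ ≤ 1/α - 1/β := by
      intro x _
      obtain ⟨h1, h2⟩ := key_inv _ (hAbd (x/ε)).1 (hAbd (x/ε)).2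
      obtain ⟨h3, h4⟩ := key_inv _ (hABbd (x/ε)).1 (hABbd (x/ε)).2
      rw [Real.norm_eq_abs]
      exact abs_le.mpr ⟨by linarith, by linarith⟩
    have hb := intervalIntegral.norm_integral_le_of_norm_le_const
      (C := 1/α - 1/β) (a := ε*q₀) (b := ε*q₁)
      (f := fun x => (1 / (Aper (x/ε) + Bper (x/ε)) - 1 / Aper (x/ε))) hptw
    rw [Real.norm_eq_abs] at hb
    have habs' : |ε*q₁ - ε*q₀| = ε*(q₁-q₀) := by
      rw [abs_of_nonneg (sub_nonneg.mpr hq1')]; ring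
    rw [habs'] at hb
    calc |∫ x in (ε * q₀)..(ε * q₁), (1 / (Aper (x / ε) + Bper (x / ε)) - 1 / Aper (x / ε))|
        ≤ (1/α - 1/β) * (ε*(q₁-q₀)) := hb
      _ = ε*(q₁-q₀)*(1/α - 1/β) := by ring
  rw [hsum]
  have hN1 : (1:ℝ) ≤ (N:ℝ) := by exact_mod_cast hN
  have hk_le : ((S.card : ℕ):ℝ) ≤ (N:ℝ) := by
    have := Finset.card_le_card hS
    rw [Finset.card_range] at this
    exact_mod_cast this
  have hk0 : (0:ℝ) ≤ ((S.card : ℕ):ℝ) := Nat.cast_nonneg _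
  have hbpos : (0:ℝ) < H/β := div_pos hH hβ
  have ha : H/β ≤ (N:ℝ)*Abar := by
    rw [hHdef]
    calc (N:ℝ)*ε/β = (N:ℝ)*(ε/β) := by ring
      _ ≤ (N:ℝ)*Abar := mul_le_mul_of_nonneg_left hAbar_lb hNpos.le
  have had : H/β ≤ (N:ℝ)*Abar + Adef := by
    have h1 : ((N:ℝ)-1)*(ε/β) ≤ ((N:ℝ)-1)*Abar :=
      mul_le_mul_of_nonneg_left hAbar_lb (by linarith)
    have e : (N:ℝ)*Abar + Adef = ((N:ℝ)-1)*Abar + (Abar + Adef) := by ring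
    have e2 : H/β = ((N:ℝ)-1)*(ε/β) + ε/β := by rw [hHdef]; ring
    rw [e, e2]
    linarith [hsum_lb]
  have hakd : H/β ≤ (N:ℝ)*Abar + (S.card:ℝ)*Adef := by
    have h1 : ((N:ℝ)-(S.card:ℝ))*(ε/β) ≤ ((N:ℝ)-(S.card:ℝ))*Abar :=
      mul_le_mul_of_nonneg_left hAbar_lb (by linarith)
    have h2 : (S.card:ℝ)*(ε/β) ≤ (S.card:ℝ)*(Abar+Adef) :=
      mul_le_mul_of_nonneg_left hsum_lb hk0
    have e : (N:ℝ)*Abar + (S.card:ℝ)*Adef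
        = ((N:ℝ)-(S.card:ℝ))*Abar + (S.card:ℝ)*(Abar+Adef) := by ring
    have e2 : H/β = ((N:ℝ)-(S.card:ℝ))*(ε/β) + (S.card:ℝ)*(ε/β) := by rw [hHdef]; ring
    rw [e, e2]
    linarith
  have hapos : 0 < (N:ℝ)*Abar := lt_of_lt_of_le hbpos ha
  have hadpos : 0 < (N:ℝ)*Abar + Adef := lt_of_lt_of_le hbpos had
  have hakdpos : 0 < (N:ℝ)*Abar + (S.card:ℝ)*Adef := lt_of_lt_of_le hbpos hakd
  have heq : H / ((N:ℝ)*Abar + (S.card:ℝ)*Adef)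
        - ((1-(S.card:ℝ))*H/((N:ℝ)*Abar) + (S.card:ℝ)*H/((N:ℝ)*Abar+Adef))
      = H*(S.card:ℝ)*((S.card:ℝ)-1)*Adef^2
        / (((N:ℝ)*Abar)*(((N:ℝ)*Abar)+Adef)*(((N:ℝ)*Abar)+(S.card:ℝ)*Adef)) := by
    have hne1 : Abar ≠ 0 := by rintro h; rw [h] at hapos; simp at hapos
    have hne2 := hadpos.ne'
    have hne3 := hakdpos.ne'
    have hne4 := hNpos.ne'
    field_simp
    ring
  have hkk : 0 ≤ (S.card:ℝ)*((S.card:ℝ)-1) := by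
    rcases Nat.eq_zero_or_pos S.card with h|h
    · rw [h]; norm_num
    · have h1 : (1:ℝ) ≤ (S.card:ℝ) := by exact_mod_cast h
      exact mul_nonneg (by linarith) (by linarith)
  have hnum : 0 ≤ H*(S.card:ℝ)*((S.card:ℝ)-1)*Adef^2 := by
    have e : H*(S.card:ℝ)*((S.card:ℝ)-1)*Adef^2
        = (H*((S.card:ℝ)*((S.card:ℝ)-1)))*Adef^2 := by ring
    rw [e]
    exact mul_nonneg (mul_nonneg hH.le hkk) (sq_nonneg _)
  have hdenpos : 0 < ((N:ℝ)*Abar)*(((N:ℝ)*Abar)+Adef)*(((N:ℝ)*Abar)+(S.card:ℝ)*Adef) :=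
    mul_pos (mul_pos hapos hadpos) hakdpos
  rw [heq, abs_of_nonneg (div_nonneg hnum hdenpos.le)]
  have hden3 : (H/β)^3 ≤ ((N:ℝ)*Abar)*(((N:ℝ)*Abar)+Adef)*(((N:ℝ)*Abar)+(S.card:ℝ)*Adef) := by
    have h1 : (H/β)*(H/β) ≤ ((N:ℝ)*Abar)*(((N:ℝ)*Abar)+Adef) :=
      mul_le_mul ha had hbpos.le hapos.le
    have h2 : ((H/β)*(H/β))*(H/β)
        ≤ (((N:ℝ)*Abar)*(((N:ℝ)*Abar)+Adef))*(((N:ℝ)*Abar)+(S.card:ℝ)*Adef) :=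
      mul_le_mul h1 hakd hbpos.le (mul_nonneg hapos.le hadpos.le)
    calc (H/β)^3 = ((H/β)*(H/β))*(H/β) := by ring
      _ ≤ _ := h2
  have hb3pos : (0:ℝ) < (H/β)^3 := by positivity
  have step1 : H*(S.card:ℝ)*((S.card:ℝ)-1)*Adef^2
        / (((N:ℝ)*Abar)*(((N:ℝ)*Abar)+Adef)*(((N:ℝ)*Abar)+(S.card:ℝ)*Adef))
      ≤ H*(S.card:ℝ)*((S.card:ℝ)-1)*Adef^2/(H/β)^3 :=
    div_le_div_of_nonneg_left hnum hb3pos hden3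
  have step2 : H*(S.card:ℝ)*((S.card:ℝ)-1)*Adef^2/(H/β)^3
      = (S.card:ℝ)*((S.card:ℝ)-1)*Adef^2*β^3/H^2 := by
    have hHne : H ≠ 0 := ne_of_gt hH
    have hβne : β ≠ 0 := ne_of_gt hβ
    rw [div_pow]
    field_simp
  have hd1 : 0 ≤ q₁ - q₀ := by linarith
  have hd2 : 0 ≤ 1/α - 1/β := by
    have := one_div_le_one_div_of_le hα hαβ
    linarith
  have step3 : Adef^2 ≤ (ε*(q₁-q₀)*(1/α-1/β))^2 := by
    have h := pow_le_pow_left₀ (abs_nonneg Adef) hAdef_bd 2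
    rwa [sq_abs] at h
  have step4 : (S.card:ℝ)*((S.card:ℝ)-1)*Adef^2*β^3/H^2
      ≤ (S.card:ℝ)*((S.card:ℝ)-1)*(ε*(q₁-q₀)*(1/α-1/β))^2*β^3/H^2 := by
    have hc : 0 ≤ (S.card:ℝ)*((S.card:ℝ)-1)*β^3 := mul_nonneg hkk (by positivity)
    have hnum2 : (S.card:ℝ)*((S.card:ℝ)-1)*Adef^2*β^3
        ≤ (S.card:ℝ)*((S.card:ℝ)-1)*(ε*(q₁-q₀)*(1/α-1/β))^2*β^3 := by
      calc (S.card:ℝ)*((S.card:ℝ)-1)*Adef^2*β^3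
          = ((S.card:ℝ)*((S.card:ℝ)-1)*β^3)*Adef^2 := by ring
        _ ≤ ((S.card:ℝ)*((S.card:ℝ)-1)*β^3)*(ε*(q₁-q₀)*(1/α-1/β))^2 :=
            mul_le_mul_of_nonneg_left step3 hc
        _ = (S.card:ℝ)*((S.card:ℝ)-1)*(ε*(q₁-q₀)*(1/α-1/β))^2*β^3 := by ring
    exact (div_le_div_iff_of_pos_right (by positivity)).mpr hnum2
  have step5 : (S.card:ℝ)*((S.card:ℝ)-1)*(ε*(q₁-q₀)*(1/α-1/β))^2*β^3/H^2
      ≤ (q₁ - q₀) ^ 2 * β ^ 3 * (1 / α - 1 / β) ^ 2 * ((ε / H) * θ + 2 * θ ^ 2) := by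
    rw [hθdef, hHdef]
    have hkq : (S.card:ℝ)*((S.card:ℝ)-1) ≤ (S.card:ℝ) + 2*(S.card:ℝ)^2 := by
      nlinarith [mul_nonneg hk0 hk0, hk0]
    have hNne : (N:ℝ) ≠ 0 := ne_of_gt hNpos
    have e : (q₁-q₀)^2*β^3*(1/α-1/β)^2
          *((ε/((N:ℝ)*ε))*((S.card:ℝ)/(N:ℝ)) + 2*((S.card:ℝ)/(N:ℝ))^2)
        = ((q₁-q₀)^2*β^3*(1/α-1/β)^2)*(((S.card:ℝ) + 2*(S.card:ℝ)^2)/(N:ℝ)^2) := by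
      field_simp
    have e2 : (S.card:ℝ)*((S.card:ℝ)-1)*(ε*(q₁-q₀)*(1/α-1/β))^2*β^3/((N:ℝ)*ε)^2
        = ((q₁-q₀)^2*β^3*(1/α-1/β)^2)*(((S.card:ℝ)*((S.card:ℝ)-1))/(N:ℝ)^2) := by
      field_simp
    rw [e, e2]
    have hC : 0 ≤ (q₁-q₀)^2*β^3*(1/α-1/β)^2 := by positivity
    apply mul_le_mul_of_nonneg_left _ hC
    exact (div_le_div_iff_of_pos_right (by positivity)).mpr hkq
  linarith [step1, step2, step4, step5]
end

section
/- Let L ≥ 1 and N ≥ 1 be natural numbers with L·N·ε = 1, set H := Nε, and for each l ∈ {0,…,L−1} let T_l := [lH,(l+1)H] be the coarse elements, S_l ⊆ {0,…,N−1} a defect set of cardinality k_l, and θ := max_l k_l/N. Let A : [0,1] → ℝ be the global sample coefficient, defined by A(x) := A_ε(x)+B_ε(x) if x ∈ [ε(lN+j+q₀), ε(lN+j+q₁)] for some l and some j ∈ S_l, and A(x) := A_ε(x) otherwise. For each l define A_harm,l := H/∫_{T_l}(1/A(x))dx and A^μ_harm,l := (1−k_l)·H/(N·Ā) + k_l·H/(N·Ā+Ā_def).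 Then for all continuous functions v, w : [0,1] → ℝ that are affine on each T_l with slopes v'_l and w'_l, the bilinear forms 𝔟(v,w) := Σ_l A_harm,l·v'_l·w'_l·H and 𝔟̃(v,w) := Σ_l A^μ_harm,l·v'_l·w'_l·H satisfy |𝔟(v,w) − 𝔟̃(v,w)| ≤ (β/α)·((β−α)/α)²·|Q|²·((ε/H)·θ + 2θ²)·(∫_0^1 A|v'|²)^{1/2}·(∫_0^1 A|w'|²)^{1/2}. -/
open MeasureTheory intervalIntegral

lemma intAux {f : ℝ → ℝ} (hf : Measurable f) {C : ℝ} (hbd : ∀ x, |f x| ≤ C) (a b : ℝ) :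
    IntervalIntegrable f volume a b := by
  refine IntervalIntegrable.mono_fun (f := fun _ : ℝ => C) intervalIntegrable_const
    hf.aestronglyMeasurable.restrict ?_
  filter_upwards with x
  simpa using (hbd x).trans (le_abs_self C)

lemma shiftAux {ε : ℝ} {f : ℝ → ℝ} (hf : Function.Periodic f ε) (n : ℕ) (a b : ℝ) :
    ∫ x in (a + n*ε)..(b + n*ε), f x = ∫ x in a..b, f x := by
  rw [← intervalIntegral.integral_comp_add_right f ((n:ℝ)*ε)]
  refine intervalIntegral.integral_congr fun x _ => ?_
  exact hf.nat_mul n x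

lemma nsmulAux {ε : ℝ} {f : ℝ → ℝ} (hf : Function.Periodic f ε)
    (hint : ∀ a b : ℝ, IntervalIntegrable f volume a b) (n : ℕ) :
    ∫ x in (0:ℝ)..(n*ε), f x = n * ∫ x in (0:ℝ)..ε, f x := by
  have h := intervalIntegral.sum_integral_adjacent_intervals
    (f := f) (μ := volume) (a := fun k : ℕ => (k:ℝ)*ε) (n := n) (fun k _ => hint _ _)
  simp only [Nat.cast_zero, zero_mul] at h
  rw [← h]
  rw [Finset.sum_congr rfl (fun k _ => ?_), Finset.sum_const, Finset.card_range,
    nsmul_eq_mul]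
  have := shiftAux hf k 0 ε
  rw [zero_add] at this
  rw [← this]
  congr 1 <;> push_cast <;> ring

lemma invBdAux {α β t : ℝ} (hα : 0 < α) (h1 : α ≤ t) (h2 : t ≤ β) :
    1/β ≤ 1/t ∧ 1/t ≤ 1/α :=
  ⟨one_div_le_one_div_of_le (hα.trans_le h1) h2, one_div_le_one_div_of_le hα h1⟩

lemma invDiffAux {α β u v : ℝ} (hα : 0 < α) (h1 : α ≤ u) (h2 : u ≤ β) (h3 : α ≤ v) (h4 : v ≤ β) :
    |1/u - 1/v| ≤ 1/α - 1/β := by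
  have hu : 0 < u := hα.trans_le h1
  have hv : 0 < v := hα.trans_le h3
  have i1 := invBdAux hα h1 h2
  have i2 := invBdAux hα h3 h4
  rw [abs_le]
  constructor <;> linarith [i1.1, i1.2, i2.1, i2.2]

open Function Set


open Function Set

set_option maxHeartbeats 2000000 in
/-- Theorem 4.1 of the paper (one-dimensional consistency error bound): the
difference between the PG-LOD bilinear form `𝔟` (with element-wise harmonic
means of the sample coefficient) and the offline-online bilinear form `𝔟̃`
(with combined offline harmonic means) is controlled by the defect fraction. -/
theorem stmt_8 (α β ε q₀ q₁ : ℝ) (Aper Bper : ℝ → ℝ)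
    (hα : 0 < α) (hαβ : α ≤ β) (hε : 0 < ε)
    (hAmeas : Measurable Aper) (hBmeas : Measurable Bper)
    (hAper : Function.Periodic Aper 1) (hBper : Function.Periodic Bper 1)
    (hAbd : ∀ y, α ≤ Aper y ∧ Aper y ≤ β)
    (hABbd : ∀ y, α ≤ Aper y + Bper y ∧ Aper y + Bper y ≤ β)
    (hq0 : 0 ≤ q₀) (hq01 : q₀ ≤ q₁) (hq1 : q₁ ≤ 1)
    (L N : ℕ) (hL : 1 ≤ L) (hN : 1 ≤ N) (hLN : (L : ℝ) * (N : ℝ) * ε = 1)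
    (S : ℕ → Finset ℕ) (hS : ∀ l, S l ⊆ Finset.range N)
    (A : ℝ → ℝ)
    (hAdef : ∀ x, (∃ l ∈ Finset.range L, ∃ j ∈ S l,
        x ∈ Set.Icc (ε * (((l * N + j : ℕ) : ℝ) + q₀)) (ε * (((l * N + j : ℕ) : ℝ) + q₁)))
        → A x = Aper (x / ε) + Bper (x / ε))
    (hAout : ∀ x, ¬ (∃ l ∈ Finset.range L, ∃ j ∈ S l,
        x ∈ Set.Icc (ε * (((l * N + j : ℕ) : ℝ) + q₀)) (ε * (((l * N + j : ℕ) : ℝ) + q₁)))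
        → A x = Aper (x / ε))
    (v w : ℝ → ℝ) (vs ws : ℕ → ℝ)
    (hvcont : ContinuousOn v (Set.Icc 0 1)) (hwcont : ContinuousOn w (Set.Icc 0 1))
    (hvaff : ∀ l ∈ Finset.range L,
        ∀ x ∈ Set.Icc ((l : ℝ) * ((N : ℝ) * ε)) (((l : ℝ) + 1) * ((N : ℝ) * ε)),
          v x = v ((l : ℝ) * ((N : ℝ) * ε)) + vs l * (x - (l : ℝ) * ((N : ℝ) * ε)))
    (hwaff : ∀ l ∈ Finset.range L,
        ∀ x ∈ Set.Icc ((l : ℝ) * ((N : ℝ) * ε)) (((l : ℝ) + 1) * ((N : ℝ) * ε)),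
          w x = w ((l : ℝ) * ((N : ℝ) * ε)) + ws l * (x - (l : ℝ) * ((N : ℝ) * ε))) :
    let H : ℝ := (N : ℝ) * ε
    let θ : ℝ := (Finset.range L).sup'
        (Finset.nonempty_range_iff.mpr (Nat.one_le_iff_ne_zero.mp hL))
        (fun l => ((S l).card : ℝ) / (N : ℝ))
    let Abar : ℝ := ∫ x in (0 : ℝ)..ε, 1 / Aper (x / ε)
    let Adef : ℝ := ∫ x in (ε * q₀)..(ε * q₁),
        (1 / (Aper (x / ε) + Bper (x / ε)) - 1 / Aper (x / ε))
    |(∑ l ∈ Finset.range L,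
          (H / (∫ x in ((l : ℝ) * H)..(((l : ℝ) + 1) * H), 1 / A x)) * vs l * ws l * H)
      - (∑ l ∈ Finset.range L,
          ((1 - ((S l).card : ℝ)) * H / ((N : ℝ) * Abar)
            + ((S l).card : ℝ) * H / ((N : ℝ) * Abar + Adef)) * vs l * ws l * H)|
      ≤ (β / α) * ((β - α) / α) ^ 2 * (q₁ - q₀) ^ 2 * ((ε / H) * θ + 2 * θ ^ 2)
        * Real.sqrt (∑ l ∈ Finset.range L,
            ∫ x in ((l : ℝ) * H)..(((l : ℝ) + 1) * H), A x * (vs l) ^ 2)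
        * Real.sqrt (∑ l ∈ Finset.range L,
            ∫ x in ((l : ℝ) * H)..(((l : ℝ) + 1) * H), A x * (ws l) ^ 2) := by
  classical
  intro H θ Abar Adef
  have hβ : 0 < β := hα.trans_le hαβ
  have hN0 : (0:ℝ) < (N:ℝ) := by exact_mod_cast hN
  have hH : H = (N:ℝ) * ε := rfl
  have hHpos : 0 < H := by rw [hH]; positivity
  have hAbarE : Abar = ∫ x in (0:ℝ)..ε, 1 / Aper (x / ε) := rfl
  have hAdefE : Adef = ∫ x in (ε * q₀)..(ε * q₁),
      (1 / (Aper (x / ε) + Bper (x / ε)) - 1 / Aper (x / ε)) := rfl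
  have hθub : ∀ l ∈ Finset.range L, ((S l).card : ℝ) / (N:ℝ) ≤ θ := by
    intro l hl
    exact Finset.le_sup' (fun l => ((S l).card : ℝ) / (N:ℝ)) hl
  have hθ0 : 0 ≤ θ := by
    refine le_trans ?_ (hθub 0 (Finset.mem_range.mpr hL))
    positivity
  clear_value H θ Abar Adef
  -- basic functions
  set f₀ : ℝ → ℝ := fun x => 1 / Aper (x/ε) with hf₀def
  set fd : ℝ → ℝ := fun x => 1 / (Aper (x/ε) + Bper (x/ε)) with hfddef
  set hdf : ℝ → ℝ := fun x => fd x - f₀ x with hhdfdef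
  have hmε : Measurable fun x : ℝ => x / ε := measurable_id.div_const ε
  have hmA0 : Measurable (fun x => Aper (x/ε)) := hAmeas.comp hmε
  have hmAB : Measurable (fun x => Aper (x/ε) + Bper (x/ε)) :=
    (hAmeas.comp hmε).add (hBmeas.comp hmε)
  have hmf₀ : Measurable f₀ := measurable_const.div hmA0
  have hmfd : Measurable fd := measurable_const.div hmAB
  have hmhdf : Measurable hdf := hmfd.sub hmf₀
  have hbdf₀ : ∀ x, |f₀ x| ≤ 1/α := by
    intro x
    have h := invBdAux hα (hAbd (x/ε)).1 (hAbd (x/ε)).2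
    have : 0 < 1/β := by positivity
    rw [abs_le]; constructor <;> simp only [hf₀def] <;> linarith [h.1, h.2]
  have hbdfd : ∀ x, |fd x| ≤ 1/α := by
    intro x
    have h := invBdAux hα (hABbd (x/ε)).1 (hABbd (x/ε)).2
    have : 0 < 1/β := by positivity
    rw [abs_le]; constructor <;> simp only [hfddef] <;> linarith [h.1, h.2]
  have hbdhdf : ∀ x, |hdf x| ≤ 1/α - 1/β := fun x =>
    invDiffAux hα (hABbd (x/ε)).1 (hABbd (x/ε)).2 (hAbd (x/ε)).1 (hAbd (x/ε)).2
  have hab : 0 ≤ 1/α - 1/β := by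
    have := invBdAux hα le_rfl hαβ; linarith [this.1]
  have hperf₀ : Function.Periodic f₀ ε := by
    intro x
    have hx : (x + ε)/ε = x/ε + 1 := by field_simp
    simp only [hf₀def, hx, hAper (x/ε)]
  have hperhdf : Function.Periodic hdf ε := by
    intro x
    have hx : (x + ε)/ε = x/ε + 1 := by field_simp
    simp only [hhdfdef, hfddef, hf₀def, hx, hAper (x/ε), hBper (x/ε)]
  -- defect set
  set Pp : ℝ → Prop := fun x => (∃ l ∈ Finset.range L, ∃ j ∈ S l,
      x ∈ Set.Icc (ε * (((l * N + j : ℕ) : ℝ) + q₀)) (ε * (((l * N + j : ℕ) : ℝ) + q₁)))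
    with hPpdef
  set Dset : Set ℝ := {x | Pp x} with hDdef
  have hDmeas : MeasurableSet Dset := by
    have : Dset = ⋃ l ∈ Finset.range L, ⋃ j ∈ S l,
        Set.Icc (ε * (((l * N + j : ℕ) : ℝ) + q₀)) (ε * (((l * N + j : ℕ) : ℝ) + q₁)) := by
      ext x
      simp only [hDdef, hPpdef, Set.mem_setOf_eq, Set.mem_iUnion, exists_prop]
    rw [this]
    exact (Finset.range L).measurableSet_biUnion fun l _ =>
      (S l).measurableSet_biUnion fun j _ => measurableSet_Icc
  have hA_eq : ∀ x, A x = if Pp x then (Aper (x/ε) + Bper (x/ε)) else Aper (x/ε) := by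
    intro x
    by_cases h : Pp x
    · rw [if_pos h]; exact hAdef x h
    · rw [if_neg h]; exact hAout x h
  have hAbd2 : ∀ x, α ≤ A x ∧ A x ≤ β := by
    intro x
    rw [hA_eq x]
    split_ifs
    · exact hABbd _
    · exact hAbd _
  have hmA : Measurable A := by
    have : A = Dset.piecewise (fun x => Aper (x/ε) + Bper (x/ε)) (fun x => Aper (x/ε)) := by
      funext x
      rw [hA_eq x]
      by_cases h : Pp x
      · rw [if_pos h, Set.piecewise_eq_of_mem _ _ _ (show x ∈ Dset from h)]
      · rw [if_neg h, Set.piecewise_eq_of_notMem _ _ _ (show x ∉ Dset from h)]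
    rw [this]
    exact Measurable.piecewise hDmeas hmAB hmA0
  have hmInvA : Measurable (fun x => 1 / A x) := measurable_const.div hmA
  have hbdInvA : ∀ x, |1 / A x| ≤ 1/α := by
    intro x
    have h := invBdAux hα (hAbd2 x).1 (hAbd2 x).2
    have : 0 < 1/β := by positivity
    rw [abs_le]; constructor <;> linarith [h.1, h.2]
  have hbdA : ∀ x, |A x| ≤ β := by
    intro x
    rw [abs_le]; constructor <;> linarith [(hAbd2 x).1, (hAbd2 x).2]
  have hinv_eq : ∀ x, 1 / A x = f₀ x + Dset.indicator hdf x := by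
    intro x
    by_cases h : Pp x
    · rw [Set.indicator_of_mem (show x ∈ Dset from h), hA_eq x, if_pos h]
      simp only [hhdfdef, hfddef, hf₀def]; ring
    · rw [Set.indicator_of_notMem (show x ∉ Dset from h), hA_eq x, if_neg h]
      simp only [hf₀def]; ring
  have hmind : Measurable (Dset.indicator hdf) := hmhdf.indicator hDmeas
  have hbdind : ∀ x, |Dset.indicator hdf x| ≤ 1/α - 1/β := by
    intro x
    by_cases h : x ∈ Dset
    · rw [Set.indicator_of_mem h]; exact hbdhdf x
    · rw [Set.indicator_of_notMem h]; simpa using hab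
  -- the element integral identity
  have key : ∀ l ∈ Finset.range L,
      (∫ x in ((l : ℝ) * H)..(((l : ℝ) + 1) * H), 1 / A x)
= (N:ℝ) * Abar + ((S l).card : ℝ) * Adef := by
    intro l hl
    have hi_f₀ : ∀ a b : ℝ, IntervalIntegrable f₀ volume a b := intAux hmf₀ hbdf₀
    have hi_ind : ∀ a b : ℝ, IntervalIntegrable (Dset.indicator hdf) volume a b :=
      intAux hmind hbdind
    have hi_hdf : ∀ a b : ℝ, IntervalIntegrable hdf volume a b := intAux hmhdf hbdhdf
    have hsplit : (∫ x in ((l:ℝ)*H)..(((l:ℝ)+1)*H), 1 / A x)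
        = (∫ x in ((l:ℝ)*H)..(((l:ℝ)+1)*H), f₀ x)
          + ∫ x in ((l:ℝ)*H)..(((l:ℝ)+1)*H), Dset.indicator hdf x := by
      rw [← intervalIntegral.integral_add (hi_f₀ _ _) (hi_ind _ _)]
      exact intervalIntegral.integral_congr fun x _ => hinv_eq x
    have h1 : (∫ x in ((l:ℝ)*H)..(((l:ℝ)+1)*H), f₀ x) = (N:ℝ) * Abar := by
      have e0 : (l:ℝ)*H = 0 + ((l*N : ℕ):ℝ)*ε := by rw [hH]; push_cast; ring
      have e1 : ((l:ℝ)+1)*H = (N:ℝ)*ε + ((l*N : ℕ):ℝ)*ε := by rw [hH]; push_cast; ring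
      rw [e0, e1, shiftAux hperf₀ (l*N) 0 ((N:ℝ)*ε), nsmulAux hperf₀ hi_f₀ N, hAbarE]
    have hle : (l:ℝ)*H ≤ ((l:ℝ)+1)*H := by
      have : (l:ℝ)*H + 0 ≤ (l:ℝ)*H + H := by linarith
      linarith [this]
    set Ij : ℕ → Set ℝ := fun j =>
      Set.Ioc (ε*(((l*N+j:ℕ):ℝ)+q₀)) (ε*(((l*N+j:ℕ):ℝ)+q₁)) with hIjdef
    have heach : ∀ j ∈ S l, (∫ x in Ij j, hdf x) = Adef := by
      intro j hj
      have hle2 : ε*(((l*N+j:ℕ):ℝ)+q₀) ≤ ε*(((l*N+j:ℕ):ℝ)+q₁) :=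
        mul_le_mul_of_nonneg_left (by linarith) hε.le
      have e2 : ε*(((l*N+j:ℕ):ℝ)+q₀) = ε*q₀ + ((l*N+j : ℕ):ℝ)*ε := by push_cast; ring
      have e3 : ε*(((l*N+j:ℕ):ℝ)+q₁) = ε*q₁ + ((l*N+j : ℕ):ℝ)*ε := by push_cast; ring
      simp only [hIjdef]
      rw [← intervalIntegral.integral_of_le hle2, e2, e3,
        shiftAux hperhdf (l*N+j) (ε*q₀) (ε*q₁), hAdefE]
    have hdisj : (↑(S l) : Set ℕ).Pairwise (Function.onFun Disjoint Ij) := by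
      intro j hj j' hj' hne
      simp only [Function.onFun, hIjdef]
      rw [Set.Ioc_disjoint_Ioc]
      rcases lt_or_gt_of_ne hne with h|h
      · refine le_trans (min_le_left _ _) (le_trans ?_ (le_max_right _ _))
        have hjj : (j:ℝ) + 1 ≤ (j':ℝ) := by exact_mod_cast h
        push_cast
        refine mul_le_mul_of_nonneg_left (by linarith) hε.le
      · refine le_trans (min_le_right _ _) (le_trans ?_ (le_max_left _ _))
        have hjj : (j':ℝ) + 1 ≤ (j:ℝ) := by exact_mod_cast h
        push_cast
        refine mul_le_mul_of_nonneg_left (by linarith) hε.le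
    have hUae : ((Set.Ioc ((l:ℝ)*H) (((l:ℝ)+1)*H) ∩ Dset : Set ℝ)) =ᵐ[volume] ((⋃ j ∈ S l, Ij j : Set ℝ)) := by
      set ZZ : Set ℝ := (Set.range fun k:ℤ => ε*((k:ℝ)+q₀))
        ∪ (Set.range fun k:ℤ => ε*((k:ℝ)+q₁))
        ∪ (Set.range fun k:ℤ => ε*(k:ℝ)) with hZZdef
      have hZc : ZZ.Countable :=
        ((Set.countable_range _).union (Set.countable_range _)).union (Set.countable_range _)
      have hZ0 : volume ZZ = 0 := hZc.measure_zero _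
      have hae : ∀ᵐ x, x ∉ ZZ := by
        rw [MeasureTheory.ae_iff]
        simpa [not_not] using hZ0
      rw [Filter.eventuallyEq_set]
      filter_upwards [hae] with x hxZ
      constructor
      · rintro ⟨hxIoc, hxD⟩
        obtain ⟨l', hl', j', hj', hxI⟩ := hxD
        have hj'N : j' < N := Finset.mem_range.mp (hS l' hj')
        have hne0 : x ≠ ε*(((l'*N+j':ℕ):ℝ)+q₀) := fun hcon =>
          hxZ (Or.inl (Or.inl ⟨((l'*N+j' : ℕ) : ℤ), by rw [hcon]; push_cast; ring⟩))
        have hne1 : x ≠ ε*(((l'*N+j':ℕ):ℝ)+q₁) := fun hcon =>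
          hxZ (Or.inl (Or.inr ⟨((l'*N+j' : ℕ) : ℤ), by rw [hcon]; push_cast; ring⟩))
        have hne2 : x ≠ ((l:ℝ)+1)*H := fun hcon =>
          hxZ (Or.inr ⟨((l*N+N : ℕ) : ℤ), by rw [hcon, hH]; push_cast; ring⟩)
        have h1' : ε*(((l'*N+j':ℕ):ℝ)+q₀) < x := lt_of_le_of_ne hxI.1 (fun h => hne0 h.symm)
        have h2' : x < ε*(((l'*N+j':ℕ):ℝ)+q₁) := lt_of_le_of_ne hxI.2 hne1
        have h3' : x < ((l:ℝ)+1)*H := lt_of_le_of_ne hxIoc.2 hne2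
        have hm1 : l*N ≤ l'*N + j' := by
          have hr : ε*((l*N:ℕ):ℝ) < ε*(((l'*N+j':ℕ):ℝ)+1) := by
            calc ε*((l*N:ℕ):ℝ) = (l:ℝ)*H := by rw [hH]; push_cast; ring
              _ < x := hxIoc.1
              _ < ε*(((l'*N+j':ℕ):ℝ)+q₁) := h2'
              _ ≤ ε*(((l'*N+j':ℕ):ℝ)+1) := mul_le_mul_of_nonneg_left (by linarith) hε.le
          have hr2 : ((l*N:ℕ):ℝ) < ((l'*N+j':ℕ):ℝ)+1 := (mul_lt_mul_iff_right₀ hε).mp hr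
          have hr3 : l*N < l'*N + j' + 1 := by exact_mod_cast hr2
          omega
        have hm2 : l'*N + j' < l*N + N := by
          have hr : ε*((l'*N+j':ℕ):ℝ) < ε*((l*N+N:ℕ):ℝ) := by
            calc ε*((l'*N+j':ℕ):ℝ) ≤ ε*(((l'*N+j':ℕ):ℝ)+q₀) :=
                mul_le_mul_of_nonneg_left (by linarith) hε.le
              _ < x := h1'
              _ < ((l:ℝ)+1)*H := h3'
              _ = ε*((l*N+N:ℕ):ℝ) := by rw [hH]; push_cast; ring
          have hr2 : ((l'*N+j':ℕ):ℝ) < ((l*N+N:ℕ):ℝ) := (mul_lt_mul_iff_right₀ hε).mp hr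
          exact_mod_cast hr2
        have hll : l' = l := by
          rcases lt_trichotomy l' l with h|h|h
          · exfalso
            have hX : (l'+1)*N ≤ l*N := Nat.mul_le_mul_right N h
            rw [Nat.succ_mul] at hX
            exact absurd (Nat.le_of_add_le_add_left (le_trans hX hm1)) (Nat.not_le.mpr hj'N)
          · exact h
          · exfalso
            have hX : (l+1)*N ≤ l'*N := Nat.mul_le_mul_right N h
            rw [Nat.succ_mul] at hX
            have : l'*N + j' < l'*N := lt_of_lt_of_le hm2 hX
            exact absurd this (Nat.not_lt.mpr (Nat.le_add_right _ _))
        subst hll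
        exact Set.mem_iUnion₂.mpr ⟨j', hj', h1', h2'.le⟩
      · intro hxU
        obtain ⟨j, hj, hxI⟩ := Set.mem_iUnion₂.mp hxU
        simp only [hIjdef, Set.mem_Ioc] at hxI
        have hjN : j < N := Finset.mem_range.mp (hS l hj)
        have hjN' : (j:ℝ) + 1 ≤ (N:ℝ) := by exact_mod_cast hjN
        refine Set.mem_inter (Set.mem_Ioc.mpr ⟨?_, ?_⟩)
          ⟨l, hl, j, hj, Set.mem_Icc.mpr ⟨hxI.1.le, hxI.2⟩⟩
        · calc (l:ℝ)*H = ε*((l*N:ℕ):ℝ) := by rw [hH]; push_cast; ring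
            _ ≤ ε*(((l*N+j:ℕ):ℝ)+q₀) := by
              push_cast
              refine mul_le_mul_of_nonneg_left (by linarith [hq0, (Nat.cast_nonneg j : (0:ℝ) ≤ (j:ℝ))]) hε.le
            _ < x := hxI.1
        · calc x ≤ ε*(((l*N+j:ℕ):ℝ)+q₁) := hxI.2
            _ ≤ ((l:ℝ)+1)*H := by
              rw [hH]
              have hq : ε*(((l*N+j:ℕ):ℝ)+q₁) ≤ ε*((l:ℝ)*N+N) := by
                refine mul_le_mul_of_nonneg_left ?_ hε.le
                push_cast
                linarith
              calc ε*(((l*N+j:ℕ):ℝ)+q₁) ≤ ε*((l:ℝ)*N+N) := hq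
                _ = ((l:ℝ)+1)*((N:ℝ)*ε) := by ring
    have h2 : (∫ x in ((l:ℝ)*H)..(((l:ℝ)+1)*H), Dset.indicator hdf x)
        = ((S l).card : ℝ) * Adef := by
      rw [intervalIntegral.integral_of_le hle, MeasureTheory.setIntegral_indicator hDmeas,
        MeasureTheory.setIntegral_congr_set hUae,
        MeasureTheory.integral_biUnion_finset (S l)
          (fun j _ => by simp only [hIjdef]; exact measurableSet_Ioc) hdisj
          (fun j _ => by simp only [hIjdef]; exact (hi_hdf _ _).1),
        Finset.sum_congr rfl heach, Finset.sum_const, nsmul_eq_mul]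
    rw [hsplit, h1, h2]
  -- integrability helpers
  have hi_f₀ : ∀ a b : ℝ, IntervalIntegrable f₀ volume a b := intAux hmf₀ hbdf₀
  have hi_fd : ∀ a b : ℝ, IntervalIntegrable fd volume a b := intAux hmfd hbdfd
  have hi_invA : ∀ a b : ℝ, IntervalIntegrable (fun x => 1 / A x) volume a b :=
    intAux hmInvA hbdInvA
  have hi_A : ∀ a b : ℝ, IntervalIntegrable A volume a b := intAux hmA hbdA
  have hleH : ∀ l : ℕ, (l:ℝ)*H ≤ ((l:ℝ)+1)*H := by
    intro l
    have e : ((l:ℝ)+1)*H = (l:ℝ)*H + H := by ring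
    linarith
  have lbpiece : ∀ (g : ℝ → ℝ), (∀ a b : ℝ, IntervalIntegrable g volume a b) →
      (∀ x, 1/β ≤ g x) → ∀ a b : ℝ, a ≤ b → (b-a)*(1/β) ≤ ∫ x in a..b, g x := by
    intro g hint hlb a b hab
    have h := intervalIntegral.integral_mono_on (μ := volume) hab
      intervalIntegrable_const (hint a b) (fun x _ => hlb x)
    simpa [intervalIntegral.integral_const, smul_eq_mul] using h
  have lbf₀ : ∀ x, 1/β ≤ f₀ x := fun x => (invBdAux hα (hAbd (x/ε)).1 (hAbd (x/ε)).2).1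
  have lbfd : ∀ x, 1/β ≤ fd x := fun x => (invBdAux hα (hABbd (x/ε)).1 (hABbd (x/ε)).2).1
  have lbinvA : ∀ x, 1/β ≤ 1 / A x := fun x => (invBdAux hα (hAbd2 x).1 (hAbd2 x).2).1
  have hN1 : (1:ℝ) ≤ (N:ℝ) := by exact_mod_cast hN
  have hAbar_lb : ε/β ≤ Abar := by
    rw [hAbarE]
    have h := lbpiece f₀ hi_f₀ lbf₀ 0 ε hε.le
    calc ε/β = (ε-0)*(1/β) := by ring
      _ ≤ _ := h
  have hAbar_pos : 0 < Abar := lt_of_lt_of_le (by positivity) hAbar_lb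
  have hHβ : 0 < H/β := div_pos hHpos hβ
  have hP1_lb : H/β ≤ (N:ℝ)*Abar := by
    have := mul_le_mul_of_nonneg_left hAbar_lb hN0.le
    rw [hH]
    calc (N:ℝ)*ε/β = (N:ℝ)*(ε/β) := by ring
      _ ≤ (N:ℝ)*Abar := this
  have hAdef_bd : |Adef| ≤ ε*(q₁-q₀)*(1/α - 1/β) := by
    rw [hAdefE]
    have h := intervalIntegral.norm_integral_le_of_norm_le_const (a := ε*q₀) (b := ε*q₁)
      (C := 1/α - 1/β) (f := hdf)
      (fun x _ => by rw [Real.norm_eq_abs]; exact hbdhdf x)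
    rw [Real.norm_eq_abs] at h
    have he : |ε*q₁ - ε*q₀| = ε*(q₁-q₀) := by
      rw [abs_of_nonneg (by nlinarith)]; ring
    calc |intervalIntegral hdf (ε*q₀) (ε*q₁) volume| ≤ (1/α-1/β)*|ε*q₁-ε*q₀| := h
      _ = ε*(q₁-q₀)*(1/α-1/β) := by rw [he]; ring
  have hP2_lb : H/β ≤ (N:ℝ)*Abar + Adef := by
    have s1 : (∫ x in (0:ℝ)..(ε*q₀), f₀ x) + (∫ x in (ε*q₀)..(ε*q₁), f₀ x)
        = ∫ x in (0:ℝ)..(ε*q₁), f₀ x :=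
      intervalIntegral.integral_add_adjacent_intervals (hi_f₀ _ _) (hi_f₀ _ _)
    have s2 : (∫ x in (0:ℝ)..(ε*q₁), f₀ x) + (∫ x in (ε*q₁)..ε, f₀ x)
        = ∫ x in (0:ℝ)..ε, f₀ x :=
      intervalIntegral.integral_add_adjacent_intervals (hi_f₀ _ _) (hi_f₀ _ _)
    have s3 : Adef = (∫ x in (ε*q₀)..(ε*q₁), fd x) - (∫ x in (ε*q₀)..(ε*q₁), f₀ x) := by
      rw [hAdefE, hhdfdef]
      exact intervalIntegral.integral_sub (hi_fd _ _) (hi_f₀ _ _)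
    have b1 := lbpiece f₀ hi_f₀ lbf₀ 0 (ε*q₀) (by positivity)
    have b2 := lbpiece fd hi_fd lbfd (ε*q₀) (ε*q₁) (by nlinarith)
    have b3 := lbpiece f₀ hi_f₀ lbf₀ (ε*q₁) ε (by nlinarith)
    have habsum : ε/β ≤ Abar + Adef := by
      rw [hAbarE]
      have : (ε*q₀-0)*(1/β) + (ε*q₁-ε*q₀)*(1/β) + (ε-ε*q₁)*(1/β) = ε/β := by ring
      linarith
    have hmul := mul_le_mul_of_nonneg_left hAbar_lb (by linarith : (0:ℝ) ≤ (N:ℝ)-1)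
    have e1 : ((N:ℝ)-1)*Abar = (N:ℝ)*Abar - Abar := by ring
    have e2 : ((N:ℝ)-1)*(ε/β) = (N:ℝ)*ε/β - ε/β := by ring
    rw [e1, e2] at hmul
    rw [hH]
    linarith
  have hP3_lb : ∀ l ∈ Finset.range L, H/β ≤ (N:ℝ)*Abar + ((S l).card:ℝ)*Adef := by
    intro l hl
    rw [← key l hl]
    have h := lbpiece (fun x => 1 / A x) hi_invA lbinvA ((l:ℝ)*H) (((l:ℝ)+1)*H) (hleH l)
    calc H/β = (((l:ℝ)+1)*H - (l:ℝ)*H)*(1/β) := by ring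
      _ ≤ _ := h
  -- per-element coefficient bound
  have coeff_bd : ∀ l ∈ Finset.range L,
      |H / ((N:ℝ)*Abar + ((S l).card:ℝ)*Adef)
        - ((1 - ((S l).card:ℝ))*H/((N:ℝ)*Abar) + ((S l).card:ℝ)*H/((N:ℝ)*Abar + Adef))|
      ≤ (β*(β-α)^2*(q₁-q₀)^2/α^2) * θ^2 := by
    intro l hl
    set k : ℝ := ((S l).card : ℝ) with hkdef
    have hk0 : (0:ℝ) ≤ k := Nat.cast_nonneg _
    have hkθ : k ≤ θ*(N:ℝ) := by
      have h := hθub l hl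
      rw [div_le_iff₀ hN0] at h
      exact h
    have hx1 : H/β ≤ (N:ℝ)*Abar := hP1_lb
    have hx2 : H/β ≤ (N:ℝ)*Abar + Adef := hP2_lb
    have hx3 : H/β ≤ (N:ℝ)*Abar + k*Adef := hP3_lb l hl
    have hx1p : 0 < (N:ℝ)*Abar := lt_of_lt_of_le hHβ hx1
    have hx2p : 0 < (N:ℝ)*Abar + Adef := lt_of_lt_of_le hHβ hx2
    have hx3p : 0 < (N:ℝ)*Abar + k*Adef := lt_of_lt_of_le hHβ hx3
    have hident : H/((N:ℝ)*Abar + k*Adef)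
        - ((1-k)*H/((N:ℝ)*Abar) + k*H/((N:ℝ)*Abar + Adef))
        = H*(k*(k-1)*Adef^2)
          /(((N:ℝ)*Abar)*((N:ℝ)*Abar + Adef)*((N:ℝ)*Abar + k*Adef)) := by
      field_simp
      ring
    rw [hident]
    have hnum0 : 0 ≤ k*(k-1) := by
      rcases Nat.eq_zero_or_pos (S l).card with h|h
      · simp [hkdef, h]
      · have h1 : (1:ℝ) ≤ k := by rw [hkdef]; exact_mod_cast h
        nlinarith
    have hnum0' : 0 ≤ H*(k*(k-1)*Adef^2) :=
      mul_nonneg hHpos.le (mul_nonneg hnum0 (sq_nonneg _))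
    have p12 : (H/β)*(H/β) ≤ ((N:ℝ)*Abar)*((N:ℝ)*Abar + Adef) :=
      mul_le_mul hx1 hx2 hHβ.le hx1p.le
    have p123 : (H/β)*(H/β)*(H/β)
        ≤ ((N:ℝ)*Abar)*((N:ℝ)*Abar + Adef)*((N:ℝ)*Abar + k*Adef) :=
      mul_le_mul p12 hx3 hHβ.le (mul_nonneg hx1p.le hx2p.le)
    have hdenpos : 0 < (H/β)*(H/β)*(H/β) := by positivity
    have hAdefsq : Adef^2 ≤ (ε*(q₁-q₀)*(1/α-1/β))^2 := by
      rw [← sq_abs]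
      exact pow_le_pow_left₀ (abs_nonneg _) hAdef_bd 2
    have hθN0 : 0 ≤ θ*(N:ℝ) := mul_nonneg hθ0 hN0.le
    have hkk : k*(k-1) ≤ (θ*(N:ℝ))*(θ*(N:ℝ)) := by nlinarith
    calc |H*(k*(k-1)*Adef^2)
          /(((N:ℝ)*Abar)*((N:ℝ)*Abar + Adef)*((N:ℝ)*Abar + k*Adef))|
        = H*(k*(k-1)*Adef^2)
          /(((N:ℝ)*Abar)*((N:ℝ)*Abar + Adef)*((N:ℝ)*Abar + k*Adef)) := by
          refine abs_of_nonneg (div_nonneg hnum0' ?_)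
          exact le_of_lt (lt_of_lt_of_le hdenpos p123)
      _ ≤ H*(k*(k-1)*Adef^2)/((H/β)*(H/β)*(H/β)) :=
          div_le_div_of_nonneg_left hnum0' hdenpos p123
      _ = β^3*(k*(k-1)*Adef^2)/H^2 := by
          field_simp
      _ ≤ β^3*(((θ*(N:ℝ))*(θ*(N:ℝ)))*((ε*(q₁-q₀)*(1/α-1/β))^2))/H^2 := by
          apply div_le_div_of_nonneg_right ?_ (by positivity)
          refine mul_le_mul_of_nonneg_left ?_ (by positivity)
          exact mul_le_mul hkk hAdefsq (sq_nonneg _) (mul_nonneg hθN0 hθN0)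
      _ = (β*(β-α)^2*(q₁-q₀)^2/α^2) * θ^2 := by
          rw [hH]
          field_simp
  -- rewrite the LHS as a single sum
  rw [← Finset.sum_sub_distrib]
  have hsum_eq : ∀ l ∈ Finset.range L,
      (H / (∫ x in ((l:ℝ)*H)..(((l:ℝ)+1)*H), 1 / A x)) * vs l * ws l * H
      - ((1 - ((S l).card:ℝ))*H/((N:ℝ)*Abar)
          + ((S l).card:ℝ)*H/((N:ℝ)*Abar + Adef)) * vs l * ws l * H
      = (H/((N:ℝ)*Abar + ((S l).card:ℝ)*Adef)
          - ((1-((S l).card:ℝ))*H/((N:ℝ)*Abar)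
            + ((S l).card:ℝ)*H/((N:ℝ)*Abar+Adef))) * (vs l * ws l * H) := by
    intro l hl
    rw [key l hl]
    ring
  rw [Finset.sum_congr rfl hsum_eq]
  set c1 : ℝ := β*(β-α)^2*(q₁-q₀)^2/α^2 with hc1def
  have hc10 : 0 ≤ c1 := by rw [hc1def]; positivity
  have step1 : |∑ l ∈ Finset.range L,
        (H/((N:ℝ)*Abar + ((S l).card:ℝ)*Adef)
          - ((1-((S l).card:ℝ))*H/((N:ℝ)*Abar)
            + ((S l).card:ℝ)*H/((N:ℝ)*Abar+Adef))) * (vs l * ws l * H)|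
      ≤ ∑ l ∈ Finset.range L, (c1*θ^2) * (|vs l| * |ws l| * H) := by
    refine (Finset.abs_sum_le_sum_abs _ _).trans (Finset.sum_le_sum ?_)
    intro l hl
    rw [abs_mul]
    have he : |vs l * ws l * H| = |vs l| * |ws l| * H := by
      rw [abs_mul, abs_mul, abs_of_pos hHpos]
    rw [he]
    exact mul_le_mul_of_nonneg_right (coeff_bd l hl) (by positivity)
  have hX0 : ∀ (u : ℕ → ℝ), (0:ℝ) ≤ ∑ l ∈ Finset.range L, H*(u l)^2 :=
    fun u => Finset.sum_nonneg fun l _ => by positivity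
  have step2 : ∑ l ∈ Finset.range L, |vs l| * |ws l| * H
      ≤ Real.sqrt (∑ l ∈ Finset.range L, H*(vs l)^2)
        * Real.sqrt (∑ l ∈ Finset.range L, H*(ws l)^2) := by
    have hcs := Finset.sum_mul_sq_le_sq_mul_sq (Finset.range L)
      (fun l => Real.sqrt H*|vs l|) (fun l => Real.sqrt H*|ws l|)
    have he : ∀ l ∈ Finset.range L,
        (Real.sqrt H * |vs l|)*(Real.sqrt H * |ws l|) = |vs l| * |ws l| * H := by
      intro l _
      calc (Real.sqrt H * |vs l|)*(Real.sqrt H * |ws l|)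
          = (Real.sqrt H * Real.sqrt H)*(|vs l| * |ws l|) := by ring
        _ = H*(|vs l| * |ws l|) := by rw [Real.mul_self_sqrt hHpos.le]
        _ = |vs l| * |ws l| * H := by ring
    have he2 : ∀ (u : ℕ → ℝ), ∀ l ∈ Finset.range L,
        (Real.sqrt H * |u l|)^2 = H*(u l)^2 := by
      intro u l _
      rw [mul_pow, Real.sq_sqrt hHpos.le, sq_abs]
    rw [Finset.sum_congr rfl he, Finset.sum_congr rfl (he2 vs),
      Finset.sum_congr rfl (he2 ws)] at hcs
    have hs0 : (0:ℝ) ≤ ∑ l ∈ Finset.range L, |vs l| * |ws l| * H :=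
      Finset.sum_nonneg fun l _ => by positivity
    have hprod0 : (0:ℝ) ≤ (∑ l ∈ Finset.range L, H*(vs l)^2) * ∑ l ∈ Finset.range L, H*(ws l)^2 :=
      mul_nonneg (hX0 vs) (hX0 ws)
    have := (Real.le_sqrt hs0 hprod0).mpr hcs
    rwa [Real.sqrt_mul (hX0 vs)] at this
  have step3 : ∀ (u : ℕ → ℝ), (∑ l ∈ Finset.range L, H*(u l)^2)
      ≤ (1/α) * ∑ l ∈ Finset.range L,
          ∫ x in ((l:ℝ)*H)..(((l:ℝ)+1)*H), A x * (u l)^2 := by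
    intro u
    rw [Finset.mul_sum]
    refine Finset.sum_le_sum fun l hl => ?_
    have hmono := intervalIntegral.integral_mono_on (μ := volume) (hleH l)
      (_root_.intervalIntegrable_const (c := α*(u l)^2)) ((hi_A _ _).mul_const _)
      (fun x _ => mul_le_mul_of_nonneg_right (hAbd2 x).1 (sq_nonneg _))
    rw [intervalIntegral.integral_const, smul_eq_mul] at hmono
    have he : (((l:ℝ)+1)*H - (l:ℝ)*H) * (α*(u l)^2) = α*(H*(u l)^2) := by ring
    rw [he] at hmono
    calc H*(u l)^2 = (1/α)*(α*(H*(u l)^2)) := by field_simp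
      _ ≤ (1/α)*(∫ x in ((l:ℝ)*H)..(((l:ℝ)+1)*H), A x * (u l)^2) :=
        mul_le_mul_of_nonneg_left hmono (by positivity)
  have hXA0 : ∀ (u : ℕ → ℝ), (0:ℝ) ≤ ∑ l ∈ Finset.range L,
      ∫ x in ((l:ℝ)*H)..(((l:ℝ)+1)*H), A x * (u l)^2 := by
    intro u
    have h := (hX0 u).trans (step3 u)
    exact (mul_nonneg_iff_of_pos_left (by positivity : (0:ℝ) < 1/α)).mp h
  -- combine
  have sq1 : ∀ (u : ℕ → ℝ), Real.sqrt (∑ l ∈ Finset.range L, H*(u l)^2)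
      ≤ Real.sqrt (1/α) * Real.sqrt (∑ l ∈ Finset.range L,
          ∫ x in ((l:ℝ)*H)..(((l:ℝ)+1)*H), A x * (u l)^2) := by
    intro u
    rw [← Real.sqrt_mul (by positivity : (0:ℝ) ≤ 1/α)]
    exact Real.sqrt_le_sqrt (step3 u)
  set X : ℝ := ∑ l ∈ Finset.range L,
      ∫ x in ((l:ℝ)*H)..(((l:ℝ)+1)*H), A x * (vs l)^2 with hXdef
  set Y : ℝ := ∑ l ∈ Finset.range L,
      ∫ x in ((l:ℝ)*H)..(((l:ℝ)+1)*H), A x * (ws l)^2 with hYdef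
  have h1 : Real.sqrt (∑ l ∈ Finset.range L, H*(vs l)^2)
      ≤ Real.sqrt (1/α) * Real.sqrt X := by
    rw [hXdef]; exact sq1 vs
  have h2 : Real.sqrt (∑ l ∈ Finset.range L, H*(ws l)^2)
      ≤ Real.sqrt (1/α) * Real.sqrt Y := by
    rw [hYdef]; exact sq1 ws
  have step4 : |∑ l ∈ Finset.range L,
        (H/((N:ℝ)*Abar + ((S l).card:ℝ)*Adef)
          - ((1-((S l).card:ℝ))*H/((N:ℝ)*Abar)
            + ((S l).card:ℝ)*H/((N:ℝ)*Abar+Adef))) * (vs l * ws l * H)|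
      ≤ (c1*θ^2) * ((1/α) * (Real.sqrt X * Real.sqrt Y)) := by
    refine step1.trans ?_
    rw [← Finset.mul_sum]
    refine (mul_le_mul_of_nonneg_left step2 (by positivity)).trans ?_
    refine mul_le_mul_of_nonneg_left ?_ (by positivity)
    calc Real.sqrt (∑ l ∈ Finset.range L, H*(vs l)^2)
          * Real.sqrt (∑ l ∈ Finset.range L, H*(ws l)^2)
        ≤ (Real.sqrt (1/α) * Real.sqrt X) * (Real.sqrt (1/α) * Real.sqrt Y) :=
          mul_le_mul h1 h2 (Real.sqrt_nonneg _)
            (mul_nonneg (Real.sqrt_nonneg _) (Real.sqrt_nonneg _))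
      _ = (Real.sqrt (1/α) * Real.sqrt (1/α)) * (Real.sqrt X * Real.sqrt Y) := by ring
      _ = (1/α) * (Real.sqrt X * Real.sqrt Y) := by
          rw [Real.mul_self_sqrt (by positivity : (0:ℝ) ≤ 1/α)]
  refine step4.trans ?_
  have hεH : ε/H = 1/(N:ℝ) := by
    rw [hH, mul_comm]
    rw [div_mul_eq_div_div, div_self hε.ne']
  rw [hεH]
  have hconst : (c1*θ^2) * (1/α)
      ≤ (β / α) * ((β - α) / α) ^ 2 * (q₁ - q₀) ^ 2 * ((1/(N:ℝ)) * θ + 2 * θ ^ 2) := by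
    have he : (β / α) * ((β - α) / α) ^ 2 * (q₁ - q₀) ^ 2 = c1 * (1/α) := by
      rw [hc1def]
      ring
    rw [he]
    have hθsq : θ^2 ≤ (1/(N:ℝ)) * θ + 2*θ^2 := by
      have hp : 0 ≤ (1/(N:ℝ)) * θ := by positivity
      nlinarith
    have h2' : c1*(1/α)*θ^2 ≤ c1*(1/α)*((1/(N:ℝ))*θ + 2*θ^2) :=
      mul_le_mul_of_nonneg_left hθsq (by positivity)
    calc (c1*θ^2)*(1/α) = c1*(1/α)*θ^2 := by ring
      _ ≤ _ := h2'
  have hfin := mul_le_mul_of_nonneg_right hconst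
    (mul_nonneg (Real.sqrt_nonneg X) (Real.sqrt_nonneg Y))
  calc (c1*θ^2) * ((1/α) * (Real.sqrt X * Real.sqrt Y))
      = ((c1*θ^2)*(1/α)) * (Real.sqrt X * Real.sqrt Y) := by ring
    _ ≤ ((β / α) * ((β - α) / α) ^ 2 * (q₁ - q₀) ^ 2 * ((1/(N:ℝ)) * θ + 2 * θ ^ 2))
        * (Real.sqrt X * Real.sqrt Y) := hfin
    _ = (β / α) * ((β - α) / α) ^ 2 * (q₁ - q₀) ^ 2 * ((1/(N:ℝ)) * θ + 2 * θ ^ 2)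
        * Real.sqrt X * Real.sqrt Y := by ring
end

section
/- Let N ∈ ℕ, let A, A_0, …, A_N : X → ℝ be measurable with α ≤ A(x) ≤ β and α ≤ A_i(x) ≤ β for 𝔪-a.e. x and all i, let μ_0,…,μ_N ∈ ℝ with Σ_{i=0}^N μ_i = 1, and set Ā := Σ_{i=0}^N μ_i A_i. Let W ⊆ L² be a closed linear subspace, g ∈ L², let c ∈ W be the A-corrector of g and c_i ∈ W the A_i-corrector of g for each i. Then ‖c − Σ_{i=0}^N μ_i c_i‖_A ≤ ‖(A^{1/2} − A^{−1/2}·Ā)·g − Σ_{i=0}^N μ_i (A^{1/2} − A^{−1/2}·A_i)·c_i‖_{L²}. -/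
open MeasureTheory
open scoped ENNReal

lemma lpCoeFnFinsetSum {α E ι : Type*} [MeasurableSpace α] {μ : Measure α}
    [NormedAddCommGroup E] {p : ℝ≥0∞} (s : Finset ι) (f : ι → Lp E p μ) :
    ⇑(∑ i ∈ s, f i) =ᵐ[μ] fun x => ∑ i ∈ s, f i x := by
  classical
  induction s using Finset.induction_on with
  | empty => simp; exact Lp.coeFn_zero E p μ
  | insert _ _ hni ih =>
      rename_i i s
      rw [Finset.sum_insert hni]
      filter_upwards [Lp.coeFn_add (f i) (∑ j ∈ s, f j), ih] with x h1 h2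
      simp only [h1, Pi.add_apply, h2, Finset.sum_insert hni]

lemma memLpBddSmul {X : Type*} [MeasurableSpace X] {μ : Measure X} {E : Type*}
    [NormedAddCommGroup E] [NormedSpace ℝ E] {φ : X → ℝ} {C : ℝ}
    (hφ : Measurable φ) (hbd : ∀ᵐ x ∂μ, ‖φ x‖ ≤ C) (f : Lp E 2 μ) :
    MemLp (fun x => φ x • f x) 2 μ :=
  (Lp.memLp f).smul (p := ∞) (memLp_top_of_bound hφ.aestronglyMeasurable C hbd)

lemma ptwiseKey {E : Type*} [NormedAddCommGroup E] [InnerProductSpace ℝ E] {n : ℕ}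
    {a : ℝ} (ha : 0 < a) (as ms : Fin n → ℝ) (gv wv : E) (cv : Fin n → E) :
    (inner ℝ ((Real.sqrt a - (∑ i, ms i * as i) / Real.sqrt a) • gv
        - ∑ i, ms i • ((Real.sqrt a - as i / Real.sqrt a) • cv i)) (Real.sqrt a • wv) : ℝ)
      = a * inner ℝ gv wv - (∑ i, ms i * (as i * (inner ℝ gv wv : ℝ)))
        - (∑ i, ms i * (a * (inner ℝ (cv i) wv : ℝ)))
        + ∑ i, ms i * (as i * (inner ℝ (cv i) wv : ℝ)) := by
  have hs : Real.sqrt a * Real.sqrt a = a := Real.mul_self_sqrt ha.le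
  have hs0 : Real.sqrt a ≠ 0 := by positivity
  have key : ∀ t C : ℝ, (Real.sqrt a - t / Real.sqrt a) * (Real.sqrt a * C) = a * C - t * C := by
    intro t C
    have h1 : t / Real.sqrt a * Real.sqrt a = t := div_mul_cancel₀ t hs0
    linear_combination C * hs - C * h1
  calc (inner ℝ ((Real.sqrt a - (∑ i, ms i * as i) / Real.sqrt a) • gv
        - ∑ i, ms i • ((Real.sqrt a - as i / Real.sqrt a) • cv i)) (Real.sqrt a • wv) : ℝ)
      = (Real.sqrt a - (∑ i, ms i * as i) / Real.sqrt a) * (Real.sqrt a * (inner ℝ gv wv : ℝ))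
        - ∑ i, ms i * ((Real.sqrt a - as i / Real.sqrt a) * (Real.sqrt a * (inner ℝ (cv i) wv : ℝ))) := by
        simp only [inner_sub_left, sum_inner, real_inner_smul_left, real_inner_smul_right]
        congr 1
        · ring
        · exact Finset.sum_congr rfl fun i _ => by ring
    _ = (a * (inner ℝ gv wv : ℝ) - (∑ i, ms i * as i) * (inner ℝ gv wv : ℝ))
        - ∑ i, (ms i * (a * (inner ℝ (cv i) wv : ℝ)) - ms i * (as i * (inner ℝ (cv i) wv : ℝ))) := by
        rw [key]
        congr 1
        refine Finset.sum_congr rfl fun i _ => ?_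
        rw [key]; ring
    _ = _ := by
        rw [Finset.sum_sub_distrib, Finset.sum_mul]
        rw [show (∑ i, ms i * as i * (inner ℝ gv wv : ℝ)) = ∑ i, ms i * (as i * (inner ℝ gv wv : ℝ))
          from Finset.sum_congr rfl fun i _ => by ring]
        ring

noncomputable def rfun {X : Type*} [MeasurableSpace X] {d N : ℕ} {μ : Measure X}
    (A : X → ℝ) (As : Fin (N + 1) → X → ℝ) (μs : Fin (N + 1) → ℝ)
    (g : Lp (EuclideanSpace ℝ (Fin d)) 2 μ)
    (cs : Fin (N + 1) → Lp (EuclideanSpace ℝ (Fin d)) 2 μ) (x : X) :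
    EuclideanSpace ℝ (Fin d) :=
  (Real.sqrt (A x) - (∑ i, μs i * As i x) / Real.sqrt (A x)) • g x
    - ∑ i, μs i • ((Real.sqrt (A x) - As i x / Real.sqrt (A x)) • cs i x)

/-- Abstract corrector-error estimate (equation (4.4) in the proof of
Theorem 4.2): the energy-norm distance between the `A`-corrector and the
combination of the `A_i`-correctors is bounded by the weighted `L²` residual. -/
theorem stmt_11 {X : Type*} [MeasurableSpace X] (μ : Measure X) (d : ℕ)
    (α β : ℝ) (hα : 0 < α) (hαβ : α ≤ β)
    (N : ℕ) (A : X → ℝ) (As : Fin (N + 1) → X → ℝ)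
    (hAmeas : Measurable A) (hAsmeas : ∀ i, Measurable (As i))
    (hAbd : ∀ᵐ x ∂μ, α ≤ A x ∧ A x ≤ β)
    (hAsbd : ∀ i, ∀ᵐ x ∂μ, α ≤ As i x ∧ As i x ≤ β)
    (μs : Fin (N + 1) → ℝ) (hμs : ∑ i, μs i = 1)
    (W : Submodule ℝ (Lp (EuclideanSpace ℝ (Fin d)) 2 μ))
    (hW : IsClosed (W : Set (Lp (EuclideanSpace ℝ (Fin d)) 2 μ)))
    (g c : Lp (EuclideanSpace ℝ (Fin d)) 2 μ)
    (cs : Fin (N + 1) → Lp (EuclideanSpace ℝ (Fin d)) 2 μ)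
    (hcW : c ∈ W)
    (hc : ∀ w ∈ W, (∫ x, A x * (inner ℝ (c x) (w x) : ℝ) ∂μ)
        = ∫ x, A x * (inner ℝ (g x) (w x) : ℝ) ∂μ)
    (hcsW : ∀ i, cs i ∈ W)
    (hcs : ∀ i, ∀ w ∈ W, (∫ x, As i x * (inner ℝ (cs i x) (w x) : ℝ) ∂μ)
        = ∫ x, As i x * (inner ℝ (g x) (w x) : ℝ) ∂μ) :
    Real.sqrt (∫ x, A x * ‖(c - ∑ i, μs i • cs i) x‖ ^ 2 ∂μ)
      ≤ Real.sqrt (∫ x,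
          ‖(Real.sqrt (A x) - (∑ i, μs i * As i x) / Real.sqrt (A x)) • g x
            - ∑ i, μs i • ((Real.sqrt (A x) - As i x / Real.sqrt (A x)) • cs i x)‖ ^ 2 ∂μ) := by
  classical
  set w : Lp (EuclideanSpace ℝ (Fin d)) 2 μ := c - ∑ i, μs i • cs i with hwdef
  have hwW : w ∈ W := Submodule.sub_mem W hcW
    (Submodule.sum_mem W fun i _ => Submodule.smul_mem W (μs i) (hcsW i))
  have hall : ∀ᵐ x ∂μ, (α ≤ A x ∧ A x ≤ β) ∧ ∀ i, α ≤ As i x ∧ As i x ≤ β :=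
    hAbd.and (ae_all_iff.2 hAsbd)
  have hwfn : ⇑w =ᵐ[μ] fun x => c x - ∑ i, μs i • (cs i) x := by
    have hsm : ∀ᵐ x ∂μ, ∀ i : Fin (N + 1), (μs i • cs i) x = μs i • (cs i) x :=
      ae_all_iff.2 fun i => Lp.coeFn_smul (μs i) (cs i)
    filter_upwards [Lp.coeFn_sub c (∑ i, μs i • cs i),
      lpCoeFnFinsetSum Finset.univ (fun i => μs i • cs i), hsm] with x h1 h2 h3
    rw [hwdef, h1]
    simp only [Pi.sub_apply, h2]
    congr 1
    exact Finset.sum_congr rfl fun i _ => h3 i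
  have habsA : ∀ᵐ x ∂μ, |A x| ≤ β := by
    filter_upwards [hall] with x hx
    rw [abs_le]; exact ⟨by linarith [hx.1.1], hx.1.2⟩
  have habs2 : ∀ i : Fin (N + 1), ∀ᵐ x ∂μ, |As i x| ≤ β := fun i => by
    filter_upwards [hall] with x hx
    rw [abs_le]; exact ⟨by linarith [(hx.2 i).1], (hx.2 i).2⟩
  have intB : ∀ B : X → ℝ, Measurable B → (∀ᵐ x ∂μ, |B x| ≤ β) →
      ∀ f : Lp (EuclideanSpace ℝ (Fin d)) 2 μ,
      Integrable (fun x => B x * (inner ℝ (f x) (w x) : ℝ)) μ := by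
    intro B hB hBb f
    exact (L2.integrable_inner (𝕜 := ℝ) f w).bdd_mul hB.aestronglyMeasurable
      (by filter_upwards [hBb] with x hx; simpa [Real.norm_eq_abs] using hx)
  -- membership in L² of the residual and of the weighted test function
  have hsqrtmeas : Measurable fun x => Real.sqrt (A x) := hAmeas.sqrt
  have hsqrtbd : ∀ᵐ x ∂μ, ‖Real.sqrt (A x)‖ ≤ Real.sqrt β := by
    filter_upwards [hall] with x hx
    rw [Real.norm_eq_abs, abs_of_nonneg (Real.sqrt_nonneg _)]
    exact Real.sqrt_le_sqrt hx.1.2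
  have hmulmeas : ∀ B : X → ℝ, Measurable B →
      Measurable fun x => Real.sqrt (A x) - B x / Real.sqrt (A x) :=
    fun B hB => hsqrtmeas.sub (hB.div hsqrtmeas)
  have hmulbd : ∀ (B : X → ℝ) (Cb : ℝ), 0 ≤ Cb → (∀ᵐ x ∂μ, |B x| ≤ Cb) →
      ∀ᵐ x ∂μ, ‖Real.sqrt (A x) - B x / Real.sqrt (A x)‖ ≤ Real.sqrt β + Cb / Real.sqrt α := by
    intro B Cb hCb hBb
    filter_upwards [hall, hBb] with x hx hBx
    have h0 : 0 < Real.sqrt α := Real.sqrt_pos.2 hα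
    have h0A : Real.sqrt α ≤ Real.sqrt (A x) := Real.sqrt_le_sqrt hx.1.1
    refine (norm_sub_le _ _).trans (add_le_add ?_ ?_)
    · rw [Real.norm_eq_abs, abs_of_nonneg (Real.sqrt_nonneg _)]
      exact Real.sqrt_le_sqrt hx.1.2
    · rw [Real.norm_eq_abs, abs_div, abs_of_nonneg (Real.sqrt_nonneg _)]
      exact div_le_div₀ hCb hBx h0 h0A
  have hAbarmeas : Measurable fun x => ∑ i, μs i * As i x :=
    Finset.measurable_sum _ fun i _ => (hAsmeas i).const_mul (μs i)
  have hAbarbd : ∀ᵐ x ∂μ, |∑ i, μs i * As i x| ≤ ∑ i, |μs i| * β := by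
    filter_upwards [hall] with x hx
    refine (Finset.abs_sum_le_sum_abs _ _).trans (Finset.sum_le_sum fun i _ => ?_)
    rw [abs_mul]
    refine mul_le_mul_of_nonneg_left ?_ (abs_nonneg _)
    rw [abs_le]; exact ⟨by linarith [(hx.2 i).1], (hx.2 i).2⟩
  have hβ0 : (0:ℝ) ≤ β := le_trans hα.le hαβ
  have hr : MemLp (rfun A As μs g cs) 2 μ := by
    have h1 := memLpBddSmul (hmulmeas _ hAbarmeas)
      (hmulbd _ _ (Finset.sum_nonneg fun i _ => mul_nonneg (abs_nonneg _) hβ0) hAbarbd) g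
    have h2 : ∀ i : Fin (N + 1),
        MemLp (fun x => μs i • ((Real.sqrt (A x) - As i x / Real.sqrt (A x)) • cs i x)) 2 μ :=
      fun i => (memLpBddSmul (hmulmeas _ (hAsmeas i)) (hmulbd _ β hβ0 (habs2 i)) (cs i)).const_smul
        (μs i)
    have h3 : MemLp
        (fun x => ∑ i, μs i • ((Real.sqrt (A x) - As i x / Real.sqrt (A x)) • cs i x)) 2 μ :=
      memLp_finset_sum _ fun i _ => h2 i
    exact h1.sub h3
  have hsLp : MemLp (fun x => Real.sqrt (A x) • w x) 2 μ := memLpBddSmul hsqrtmeas hsqrtbd w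
  set R := hr.toLp _ with hRdef
  set S := hsLp.toLp _ with hSdef
  -- corrector identities
  have hcw := hc w hwW
  have hcsw : ∀ i, (∫ x, As i x * (inner ℝ (cs i x) (w x) : ℝ) ∂μ)
      = ∫ x, As i x * (inner ℝ (g x) (w x) : ℝ) ∂μ := fun i => hcs i w hwW
  have hint1 := intB A hAmeas habsA g
  have hint2 : ∀ i : Fin (N + 1),
      Integrable (fun x => μs i * (As i x * (inner ℝ (g x) (w x) : ℝ))) μ :=
    fun i => (intB (As i) (hAsmeas i) (habs2 i) g).const_mul (μs i)
  have hint3 : ∀ i : Fin (N + 1),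
      Integrable (fun x => μs i * (A x * (inner ℝ (cs i x) (w x) : ℝ))) μ :=
    fun i => (intB A hAmeas habsA (cs i)).const_mul (μs i)
  have hint4 : ∀ i : Fin (N + 1),
      Integrable (fun x => μs i * (As i x * (inner ℝ (cs i x) (w x) : ℝ))) μ :=
    fun i => (intB (As i) (hAsmeas i) (habs2 i) (cs i)).const_mul (μs i)
  have hRS : (inner ℝ R S : ℝ)
      = (∫ x, A x * (inner ℝ (c x) (w x) : ℝ) ∂μ)
        - ∑ i, μs i * ∫ x, A x * (inner ℝ (cs i x) (w x) : ℝ) ∂μ := by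
    rw [L2.inner_def]
    have e1 : (∫ x, (inner ℝ (R x) (S x) : ℝ) ∂μ)
        = ∫ x, (A x * (inner ℝ (g x) (w x) : ℝ)
            - ∑ i, μs i * (As i x * (inner ℝ (g x) (w x) : ℝ))
            - ∑ i, μs i * (A x * (inner ℝ (cs i x) (w x) : ℝ))
            + ∑ i, μs i * (As i x * (inner ℝ (cs i x) (w x) : ℝ))) ∂μ := by
      refine integral_congr_ae ?_
      filter_upwards [hr.coeFn_toLp, hsLp.coeFn_toLp, hall] with x h1 h2 hx
      rw [h1, h2]
      exact ptwiseKey (lt_of_lt_of_le hα hx.1.1) (fun i => As i x) μs (g x) (w x)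
        (fun i => cs i x)
    have hI2 : Integrable (fun x => ∑ i, μs i * (As i x * (inner ℝ (g x) (w x) : ℝ))) μ :=
      integrable_finset_sum _ fun i _ => hint2 i
    have hI3 : Integrable (fun x => ∑ i, μs i * (A x * (inner ℝ (cs i x) (w x) : ℝ))) μ :=
      integrable_finset_sum _ fun i _ => hint3 i
    have hI4 : Integrable (fun x => ∑ i, μs i * (As i x * (inner ℝ (cs i x) (w x) : ℝ))) μ :=
      integrable_finset_sum _ fun i _ => hint4 i
    have hI12 : Integrable (fun x => A x * (inner ℝ (g x) (w x) : ℝ)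
        - ∑ i, μs i * (As i x * (inner ℝ (g x) (w x) : ℝ))) μ := hint1.sub hI2
    have hI123 : Integrable (fun x => (A x * (inner ℝ (g x) (w x) : ℝ)
        - ∑ i, μs i * (As i x * (inner ℝ (g x) (w x) : ℝ)))
        - ∑ i, μs i * (A x * (inner ℝ (cs i x) (w x) : ℝ))) μ := hI12.sub hI3
    rw [e1, integral_add hI123 hI4, integral_sub hI12 hI3, integral_sub hint1 hI2,
      integral_finset_sum _ (fun i _ => hint2 i), integral_finset_sum _ (fun i _ => hint3 i),
      integral_finset_sum _ (fun i _ => hint4 i)]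
    simp_rw [integral_const_mul]
    rw [← hcw]
    rw [show (∑ i, μs i * ∫ x, As i x * (inner ℝ (g x) (w x) : ℝ) ∂μ)
        = ∑ i, μs i * ∫ x, As i x * (inner ℝ (cs i x) (w x) : ℝ) ∂μ from
      Finset.sum_congr rfl fun i _ => by rw [hcsw i]]
    ring
  have hL : (∫ x, A x * ‖w x‖ ^ 2 ∂μ)
      = (∫ x, A x * (inner ℝ (c x) (w x) : ℝ) ∂μ)
        - ∑ i, μs i * ∫ x, A x * (inner ℝ (cs i x) (w x) : ℝ) ∂μ := by
    have e2 : (∫ x, A x * ‖w x‖ ^ 2 ∂μ)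
        = ∫ x, (A x * (inner ℝ (c x) (w x) : ℝ)
            - ∑ i, μs i * (A x * (inner ℝ (cs i x) (w x) : ℝ))) ∂μ := by
      refine integral_congr_ae ?_
      filter_upwards [hwfn] with x hx
      rw [hx, ← real_inner_self_eq_norm_sq]
      simp only [inner_sub_left, sum_inner, real_inner_smul_left]
      rw [mul_sub, Finset.mul_sum]
      congr 1
      exact Finset.sum_congr rfl fun i _ => by ring
    have hI3 : Integrable (fun x => ∑ i, μs i * (A x * (inner ℝ (cs i x) (w x) : ℝ))) μ :=
      integrable_finset_sum _ fun i _ => hint3 i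
    rw [e2, integral_sub (intB A hAmeas habsA c) hI3,
      integral_finset_sum _ (fun i _ => hint3 i)]
    simp_rw [integral_const_mul]
  have hS2 : ‖S‖ ^ 2 = ∫ x, A x * ‖w x‖ ^ 2 ∂μ := by
    rw [← real_inner_self_eq_norm_sq, L2.inner_def]
    refine integral_congr_ae ?_
    filter_upwards [hsLp.coeFn_toLp, hall] with x h1 hx
    rw [h1, real_inner_smul_left, real_inner_smul_right, real_inner_self_eq_norm_sq,
      ← mul_assoc, Real.mul_self_sqrt (le_trans hα.le hx.1.1)]
  have hR2 : ‖R‖ ^ 2 = ∫ x, ‖rfun A As μs g cs x‖ ^ 2 ∂μ := by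
    rw [← real_inner_self_eq_norm_sq, L2.inner_def]
    refine integral_congr_ae ?_
    filter_upwards [hr.coeFn_toLp] with x h1
    rw [h1, real_inner_self_eq_norm_sq]
  have hinner : (inner ℝ R S : ℝ) = ∫ x, A x * ‖w x‖ ^ 2 ∂μ := by rw [hRS]; exact hL.symm
  have hle : ‖S‖ ^ 2 ≤ ‖R‖ * ‖S‖ := by
    rw [hS2, ← hinner]; exact real_inner_le_norm R S
  have hSR : ‖S‖ ≤ ‖R‖ := by nlinarith [norm_nonneg R, norm_nonneg S]
  calc Real.sqrt (∫ x, A x * ‖w x‖ ^ 2 ∂μ)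
      = Real.sqrt (‖S‖ ^ 2) := by rw [hS2]
    _ = ‖S‖ := Real.sqrt_sq (norm_nonneg S)
    _ ≤ ‖R‖ := hSR
    _ = Real.sqrt (‖R‖ ^ 2) := (Real.sqrt_sq (norm_nonneg R)).symm
    _ = Real.sqrt (∫ x, ‖rfun A As μs g cs x‖ ^ 2 ∂μ) := by rw [hR2]
end

section
/- Let N ∈ ℕ, let A, A_0, …, A_N : X → ℝ be measurable with α ≤ A(x) ≤ β and α ≤ A_i(x) ≤ β for 𝔪-a.e. x and all i, let μ_0,…,μ_N ∈ ℝ with Σ_{i=0}^N μ_i = 1, and set Ā := Σ_{i=0}^N μ_i A_i. Let W ⊆ L² be a closed linear subspace, g ∈ L², let c ∈ W be the A-corrector of g and c_i ∈ W the A_i-corrector of g, and set E := ‖(A^{1/2} − A^{−1/2}·Ā)·g − Σ_{i=0}^N μ_i (A^{1/2} − A^{−1/2}·A_i)·c_i‖_{L²}. Then for every w ∈ L², | ⟨g − c, w⟩_A − Σ_{i=0}^N μ_i ⟨g − c_i, w⟩_{A_i} | ≤ 2·E·‖w‖_A. -/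
open MeasureTheory

section aux
variable {X : Type*} [MeasurableSpace X] {μ : Measure X}
  {F : Type*} [NormedAddCommGroup F] [InnerProductSpace ℝ F]

lemma aux_memL2_smul {b : X → ℝ} (hb : AEStronglyMeasurable b μ) {C : ℝ}
    (hbC : ∀ᵐ x ∂μ, |b x| ≤ C) {u : X → F} (hu : MemLp u 2 μ) :
    MemLp (fun x => b x • u x) 2 μ := by
  refine MemLp.of_le_mul (c := C) hu (hb.smul hu.aestronglyMeasurable) ?_
  filter_upwards [hbC] with x hx
  rw [norm_smul, Real.norm_eq_abs]
  exact mul_le_mul_of_nonneg_right hx (norm_nonneg _)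

lemma aux_integrable_inner {f h : X → F} (hf : MemLp f 2 μ) (hh : MemLp h 2 μ) :
    Integrable (fun x => (inner ℝ (f x) (h x) : ℝ)) μ := by
  have := L2.integrable_inner (𝕜 := ℝ) (hf.toLp f) (hh.toLp h)
  refine this.congr ?_
  filter_upwards [hf.coeFn_toLp, hh.coeFn_toLp] with x h1 h2
  rw [h1, h2]

lemma aux_norm_toLp {f : X → F} (hf : MemLp f 2 μ) :
    ‖hf.toLp f‖ = Real.sqrt (∫ x, ‖f x‖ ^ 2 ∂μ) := by
  have h1 : (inner ℝ (hf.toLp f) (hf.toLp f) : ℝ) = ∫ x, ‖f x‖ ^ 2 ∂μ := by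
    rw [L2.inner_def]
    refine integral_congr_ae ?_
    filter_upwards [hf.coeFn_toLp] with x hx
    rw [hx, real_inner_self_eq_norm_sq]
  rw [← Real.sqrt_sq (norm_nonneg (hf.toLp f)), ← real_inner_self_eq_norm_sq, h1]

lemma aux_cs {f h : X → F} (hf : MemLp f 2 μ) (hh : MemLp h 2 μ) :
    |∫ x, (inner ℝ (f x) (h x) : ℝ) ∂μ| ≤
      Real.sqrt (∫ x, ‖f x‖ ^ 2 ∂μ) * Real.sqrt (∫ x, ‖h x‖ ^ 2 ∂μ) := by
  have h1 : (∫ x, (inner ℝ (f x) (h x) : ℝ) ∂μ) = inner ℝ (hf.toLp f) (hh.toLp h) := by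
    rw [L2.inner_def]
    refine (integral_congr_ae ?_).symm
    filter_upwards [hf.coeFn_toLp, hh.coeFn_toLp] with x h1 h2
    rw [h1, h2]
  rw [h1, ← aux_norm_toLp hf, ← aux_norm_toLp hh]
  exact abs_real_inner_le_norm _ _

lemma aux_integrable_weight {b : X → ℝ} (hb : AEStronglyMeasurable b μ) {C : ℝ}
    (hbC : ∀ᵐ x ∂μ, |b x| ≤ C) {u v : X → F} (hu : MemLp u 2 μ) (hv : MemLp v 2 μ) :
    Integrable (fun x => b x * (inner ℝ (u x) (v x) : ℝ)) μ := by
  have h1 := aux_integrable_inner (aux_memL2_smul hb hbC hu) hv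
  refine h1.congr (Filter.Eventually.of_forall fun x => ?_)
  simp only [real_inner_smul_left]

end aux

lemma aux_coeFn_sum {X : Type*} [MeasurableSpace X] {μ : Measure X}
    {F : Type*} [NormedAddCommGroup F] {p : ENNReal} [Fact (1 ≤ p)]
    {ι : Type*} (s : Finset ι) (f : ι → Lp F p μ) :
    ⇑(∑ i ∈ s, f i) =ᵐ[μ] fun x => ∑ i ∈ s, f i x := by
  classical
  induction s using Finset.induction_on with
  | empty => simp only [Finset.sum_empty]; exact Lp.coeFn_zero F p μ
  | @insert a s ha ih =>
    rw [Finset.sum_insert ha]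
    filter_upwards [Lp.coeFn_add (f a) (∑ i ∈ s, f i), ih] with x h1 h2
    rw [h1, Pi.add_apply, h2, Finset.sum_insert ha]

set_option maxHeartbeats 1000000 in
/-- Abstract form of the local consistency estimate (4.3) in the proof of
Theorem 4.2: the difference between the PG-LOD element contribution
`⟨g − c, w⟩_A` and the combined offline contribution `Σ μ_i ⟨g − c_i, w⟩_{A_i}`
is bounded by `2·E·‖w‖_A`. -/
theorem stmt_12 {X : Type*} [MeasurableSpace X] (μ : Measure X) (d : ℕ)
    (α β : ℝ) (hα : 0 < α) (hαβ : α ≤ β)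
    (N : ℕ) (A : X → ℝ) (As : Fin (N + 1) → X → ℝ)
    (hAmeas : Measurable A) (hAsmeas : ∀ i, Measurable (As i))
    (hAbd : ∀ᵐ x ∂μ, α ≤ A x ∧ A x ≤ β)
    (hAsbd : ∀ i, ∀ᵐ x ∂μ, α ≤ As i x ∧ As i x ≤ β)
    (μs : Fin (N + 1) → ℝ) (hμs : ∑ i, μs i = 1)
    (W : Submodule ℝ (Lp (EuclideanSpace ℝ (Fin d)) 2 μ))
    (hW : IsClosed (W : Set (Lp (EuclideanSpace ℝ (Fin d)) 2 μ)))
    (g c : Lp (EuclideanSpace ℝ (Fin d)) 2 μ)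
    (cs : Fin (N + 1) → Lp (EuclideanSpace ℝ (Fin d)) 2 μ)
    (hcW : c ∈ W)
    (hc : ∀ w ∈ W, (∫ x, A x * (inner ℝ (c x) (w x) : ℝ) ∂μ)
        = ∫ x, A x * (inner ℝ (g x) (w x) : ℝ) ∂μ)
    (hcsW : ∀ i, cs i ∈ W)
    (hcs : ∀ i, ∀ w ∈ W, (∫ x, As i x * (inner ℝ (cs i x) (w x) : ℝ) ∂μ)
        = ∫ x, As i x * (inner ℝ (g x) (w x) : ℝ) ∂μ) :
    let E : ℝ := Real.sqrt (∫ x,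
        ‖(Real.sqrt (A x) - (∑ i, μs i * As i x) / Real.sqrt (A x)) • g x
          - ∑ i, μs i • ((Real.sqrt (A x) - As i x / Real.sqrt (A x)) • cs i x)‖ ^ 2 ∂μ)
    ∀ w : Lp (EuclideanSpace ℝ (Fin d)) 2 μ,
      |(∫ x, A x * (inner ℝ ((g - c) x) (w x) : ℝ) ∂μ)
          - ∑ i, μs i * ∫ x, As i x * (inner ℝ ((g - cs i) x) (w x) : ℝ) ∂μ|
        ≤ 2 * E * Real.sqrt (∫ x, A x * ‖w x‖ ^ 2 ∂μ) := by
  intro E w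
  set hfun : X → EuclideanSpace ℝ (Fin d) := fun x =>
      (Real.sqrt (A x) - (∑ i, μs i * As i x) / Real.sqrt (A x)) • g x
        - ∑ i, μs i • ((Real.sqrt (A x) - As i x / Real.sqrt (A x)) • cs i x)
    with hfun_def
  have hE : E = Real.sqrt (∫ x, ‖hfun x‖ ^ 2 ∂μ) := rfl
  -- a.e. facts
  have haeAs : ∀ᵐ x ∂μ, ∀ i, α ≤ As i x ∧ As i x ≤ β := ae_all_iff.2 hAsbd
  have hsqα : 0 < Real.sqrt α := Real.sqrt_pos.2 hα
  -- measurability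
  have hAbm : Measurable fun x => ∑ i, μs i * As i x :=
    Finset.measurable_sum _ fun i _ => (hAsmeas i).const_mul (μs i)
  have hSm : Measurable fun x => Real.sqrt (A x) := hAmeas.sqrt
  -- bounds
  have habsA : ∀ᵐ x ∂μ, |A x| ≤ β := by
    filter_upwards [hAbd] with x hx
    rw [abs_of_nonneg (le_trans hα.le hx.1)]; exact hx.2
  have habsAs : ∀ i, ∀ᵐ x ∂μ, |As i x| ≤ β := fun i => by
    filter_upwards [hAsbd i] with x hx
    rw [abs_of_nonneg (le_trans hα.le hx.1)]; exact hx.2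
  have habsAb : ∀ᵐ x ∂μ, |∑ i, μs i * As i x| ≤ (∑ i, |μs i|) * β := by
    filter_upwards [haeAs] with x hx
    calc |∑ i, μs i * As i x| ≤ ∑ i, |μs i * As i x| := Finset.abs_sum_le_sum_abs _ _
      _ ≤ ∑ i, |μs i| * β := by
          refine Finset.sum_le_sum fun i _ => ?_
          rw [abs_mul]
          refine mul_le_mul_of_nonneg_left ?_ (abs_nonneg _)
          rw [abs_of_nonneg (le_trans hα.le (hx i).1)]; exact (hx i).2
      _ = (∑ i, |μs i|) * β := (Finset.sum_mul _ _ _).symm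
  have habsAmAb : ∀ᵐ x ∂μ, |A x - ∑ i, μs i * As i x| ≤ β + (∑ i, |μs i|) * β := by
    filter_upwards [habsA, habsAb] with x h1 h2
    exact (abs_sub _ _).trans (add_le_add h1 h2)
  have habsAmAs : ∀ i, ∀ᵐ x ∂μ, |A x - As i x| ≤ β + β := fun i => by
    filter_upwards [habsA, habsAs i] with x h1 h2
    exact (abs_sub _ _).trans (add_le_add h1 h2)
  -- integrability workhorse
  have hIw : ∀ (B : X → ℝ), Measurable B → ∀ (C : ℝ), (∀ᵐ x ∂μ, |B x| ≤ C) →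
      ∀ u v : Lp (EuclideanSpace ℝ (Fin d)) 2 μ,
        Integrable (fun x => B x * (inner ℝ (u x) (v x) : ℝ)) μ := fun B hB C hC u v =>
    aux_integrable_weight hB.aestronglyMeasurable hC (Lp.memLp u) (Lp.memLp v)
  have IA := hIw A hAmeas β habsA
  have IAs : ∀ i, ∀ u v : Lp (EuclideanSpace ℝ (Fin d)) 2 μ,
      Integrable (fun x => As i x * (inner ℝ (u x) (v x) : ℝ)) μ := fun i =>
    hIw (As i) (hAsmeas i) β (habsAs i)
  have IAmAb := hIw (fun x => A x - ∑ i, μs i * As i x) (hAmeas.sub hAbm) _ habsAmAb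
  have IAmAs : ∀ i, ∀ u v : Lp (EuclideanSpace ℝ (Fin d)) 2 μ,
      Integrable (fun x => (A x - As i x) * (inner ℝ (u x) (v x) : ℝ)) μ := fun i =>
    hIw _ (hAmeas.sub (hAsmeas i)) _ (habsAmAs i)
  -- MemLp facts
  have hSb : ∀ᵐ x ∂μ, |Real.sqrt (A x)| ≤ Real.sqrt β := by
    filter_upwards [hAbd] with x hx
    rw [abs_of_nonneg (Real.sqrt_nonneg _)]
    exact Real.sqrt_le_sqrt hx.2
  have mw' : ∀ v : Lp (EuclideanSpace ℝ (Fin d)) 2 μ,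
      MemLp (fun x => Real.sqrt (A x) • (v x)) 2 μ := fun v =>
    aux_memL2_smul hSm.aestronglyMeasurable hSb (Lp.memLp v)
  have mh : MemLp hfun 2 μ := by
    rw [hfun_def]
    refine MemLp.sub ?_ ?_
    · refine aux_memL2_smul ((hSm.sub (hAbm.div hSm)).aestronglyMeasurable)
        (C := Real.sqrt β + (∑ i, |μs i|) * β / Real.sqrt α) ?_ (Lp.memLp g)
      filter_upwards [hAbd, habsAb] with x h1 h2
      have hS1 : Real.sqrt α ≤ Real.sqrt (A x) := Real.sqrt_le_sqrt h1.1
      refine (abs_sub _ _).trans (add_le_add ?_ ?_)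
      · rw [abs_of_nonneg (Real.sqrt_nonneg _)]; exact Real.sqrt_le_sqrt h1.2
      · rw [Pi.div_apply, abs_div, abs_of_nonneg (Real.sqrt_nonneg _)]
        exact div_le_div₀ (mul_nonneg (Finset.sum_nonneg fun i _ => abs_nonneg _) (hα.le.trans hαβ)) h2 hsqα hS1
    · refine memLp_finset_sum _ fun i _ => ?_
      refine MemLp.const_smul ?_ (μs i)
      refine aux_memL2_smul ((hSm.sub ((hAsmeas i).div hSm)).aestronglyMeasurable)
        (C := Real.sqrt β + β / Real.sqrt α) ?_ (Lp.memLp (cs i))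
      filter_upwards [hAbd, habsAs i] with x h1 h2
      have hS1 : Real.sqrt α ≤ Real.sqrt (A x) := Real.sqrt_le_sqrt h1.1
      refine (abs_sub _ _).trans (add_le_add ?_ ?_)
      · rw [abs_of_nonneg (Real.sqrt_nonneg _)]; exact Real.sqrt_le_sqrt h1.2
      · rw [Pi.div_apply, abs_div, abs_of_nonneg (Real.sqrt_nonneg _)]
        exact div_le_div₀ (hα.le.trans hαβ) h2 hsqα hS1
  -- the corrector combination
  set z : Lp (EuclideanSpace ℝ (Fin d)) 2 μ := (∑ i, μs i • cs i) - c with hz_def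
  have hzW : z ∈ W :=
    W.sub_mem (Submodule.sum_mem W fun i _ => W.smul_mem (μs i) (hcsW i)) hcW
  have hzfn : ⇑z =ᵐ[μ] fun x => (∑ i, μs i • cs i x) - c x := by
    have h3 : ∀ᵐ x ∂μ, ∀ i, (⇑(μs i • cs i)) x = μs i • cs i x :=
      ae_all_iff.2 fun i => Lp.coeFn_smul (μs i) (cs i)
    filter_upwards [Lp.coeFn_sub (∑ i, μs i • cs i) c,
      aux_coeFn_sum Finset.univ (fun i => μs i • cs i), h3] with x h1 h2 h3
    rw [hz_def, h1, Pi.sub_apply, h2]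
    congr 1
    exact Finset.sum_congr rfl fun i _ => h3 i
  -- parametric identity J
  have hJ : ∀ v : Lp (EuclideanSpace ℝ (Fin d)) 2 μ,
      (∫ x, (inner ℝ (hfun x) (Real.sqrt (A x) • v x) : ℝ) ∂μ)
        = ((∫ x, A x * (inner ℝ (g x) (v x) : ℝ) ∂μ)
            - ∑ i, μs i * ∫ x, As i x * (inner ℝ (g x) (v x) : ℝ) ∂μ)
          - ((∑ i, μs i * ∫ x, A x * (inner ℝ (cs i x) (v x) : ℝ) ∂μ)
            - ∑ i, μs i * ∫ x, As i x * (inner ℝ (cs i x) (v x) : ℝ) ∂μ) := by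
    intro v
    have step1 : (∫ x, (inner ℝ (hfun x) (Real.sqrt (A x) • v x) : ℝ) ∂μ)
        = ∫ x, ((A x - ∑ i, μs i * As i x) * (inner ℝ (g x) (v x) : ℝ)
            - ∑ i, μs i * ((A x - As i x) * (inner ℝ (cs i x) (v x) : ℝ))) ∂μ := by
      refine integral_congr_ae ?_
      filter_upwards [hAbd] with x hx
      have hA0 : (0:ℝ) < A x := lt_of_lt_of_le hα hx.1
      have hS0 : Real.sqrt (A x) ≠ 0 := (Real.sqrt_pos.2 hA0).ne'
      have hSS : Real.sqrt (A x) * Real.sqrt (A x) = A x := Real.mul_self_sqrt hA0.le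
      have hst : ∀ t : ℝ, Real.sqrt (A x) * (Real.sqrt (A x) - t / Real.sqrt (A x)) = A x - t := by
        intro t
        rw [mul_sub, hSS, ← mul_div_assoc, mul_div_cancel_left₀ _ hS0]
      simp only [hfun_def, real_inner_smul_right, inner_sub_left, sum_inner, real_inner_smul_left]
      congr 1
      · rw [← mul_assoc, hst]
      refine Finset.sum_congr rfl fun i _ => ?_
      rw [show Real.sqrt (A x) * (μs i * ((Real.sqrt (A x) - As i x / Real.sqrt (A x))
            * (inner ℝ (cs i x) (v x) : ℝ)))
          = μs i * ((Real.sqrt (A x) * (Real.sqrt (A x) - As i x / Real.sqrt (A x)))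
            * (inner ℝ (cs i x) (v x) : ℝ)) from by ring, hst]
    rw [step1, integral_sub (IAmAb g v)
        (integrable_finset_sum _ fun i _ => ((IAmAs i (cs i) v).const_mul (μs i))),
      integral_finset_sum _ fun i _ => ((IAmAs i (cs i) v).const_mul (μs i))]
    have e1 : (∫ x, (A x - ∑ i, μs i * As i x) * (inner ℝ (g x) (v x) : ℝ) ∂μ)
        = (∫ x, A x * (inner ℝ (g x) (v x) : ℝ) ∂μ)
          - ∑ i, μs i * ∫ x, As i x * (inner ℝ (g x) (v x) : ℝ) ∂μ := by
      have h2 : (fun x => (A x - ∑ i, μs i * As i x) * (inner ℝ (g x) (v x) : ℝ))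
          = fun x => A x * (inner ℝ (g x) (v x) : ℝ)
            - ∑ i, μs i * (As i x * (inner ℝ (g x) (v x) : ℝ)) := by
        funext x
        rw [sub_mul, Finset.sum_mul]
        congr 1
        exact Finset.sum_congr rfl fun i _ => (mul_assoc _ _ _)
      rw [h2, integral_sub (IA g v)
          (integrable_finset_sum _ fun i _ => (IAs i g v).const_mul (μs i)),
        integral_finset_sum _ fun i _ => (IAs i g v).const_mul (μs i)]
      simp_rw [integral_const_mul]
    have e2 : ∀ i, (∫ x, μs i * ((A x - As i x) * (inner ℝ (cs i x) (v x) : ℝ)) ∂μ)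
        = μs i * ((∫ x, A x * (inner ℝ (cs i x) (v x) : ℝ) ∂μ)
            - ∫ x, As i x * (inner ℝ (cs i x) (v x) : ℝ) ∂μ) := by
      intro i
      rw [integral_const_mul]
      congr 1
      have h2 : (fun x => (A x - As i x) * (inner ℝ (cs i x) (v x) : ℝ))
          = fun x => A x * (inner ℝ (cs i x) (v x) : ℝ) - As i x * (inner ℝ (cs i x) (v x) : ℝ) := by
        funext x; rw [sub_mul]
      rw [h2, integral_sub (IA (cs i) v) (IAs i (cs i) v)]
    have e2' : (∑ i, ∫ x, μs i * ((A x - As i x) * (inner ℝ (cs i x) (v x) : ℝ)) ∂μ)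
        = ∑ i, μs i * ((∫ x, A x * (inner ℝ (cs i x) (v x) : ℝ) ∂μ)
            - ∫ x, As i x * (inner ℝ (cs i x) (v x) : ℝ) ∂μ) :=
      Finset.sum_congr rfl fun i _ => e2 i
    rw [e1, e2']
    simp only [mul_sub, Finset.sum_sub_distrib]
    try ring
  -- parametric identity K
  have hK : ∀ v : Lp (EuclideanSpace ℝ (Fin d)) 2 μ,
      (∫ x, A x * (inner ℝ (z x) (v x) : ℝ) ∂μ)
        = (∑ i, μs i * ∫ x, A x * (inner ℝ (cs i x) (v x) : ℝ) ∂μ)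
          - ∫ x, A x * (inner ℝ (c x) (v x) : ℝ) ∂μ := by
    intro v
    have step1 : (∫ x, A x * (inner ℝ (z x) (v x) : ℝ) ∂μ)
        = ∫ x, ((∑ i, μs i * (A x * (inner ℝ (cs i x) (v x) : ℝ)))
            - A x * (inner ℝ (c x) (v x) : ℝ)) ∂μ := by
      refine integral_congr_ae ?_
      filter_upwards [hzfn] with x hx
      rw [hx, inner_sub_left, sum_inner]
      simp only [real_inner_smul_left]
      rw [mul_sub, Finset.mul_sum]
      congr 1
      exact Finset.sum_congr rfl fun i _ => by ring
    rw [step1, integral_sub (integrable_finset_sum _ fun i _ => (IA (cs i) v).const_mul (μs i))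
        (IA c v), integral_finset_sum _ fun i _ => (IA (cs i) v).const_mul (μs i)]
    simp_rw [integral_const_mul]
  -- decomposition of the target quantity
  have hD : (∫ x, A x * (inner ℝ ((g - c) x) (w x) : ℝ) ∂μ)
        - ∑ i, μs i * ∫ x, As i x * (inner ℝ ((g - cs i) x) (w x) : ℝ) ∂μ
      = (∫ x, (inner ℝ (hfun x) (Real.sqrt (A x) • w x) : ℝ) ∂μ)
        + ∫ x, A x * (inner ℝ (z x) (w x) : ℝ) ∂μ := by
    have d1 : (∫ x, A x * (inner ℝ ((g - c) x) (w x) : ℝ) ∂μ)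
        = (∫ x, A x * (inner ℝ (g x) (w x) : ℝ) ∂μ)
          - ∫ x, A x * (inner ℝ (c x) (w x) : ℝ) ∂μ := by
      rw [← integral_sub (IA g w) (IA c w)]
      refine integral_congr_ae ?_
      filter_upwards [Lp.coeFn_sub g c] with x hx
      rw [hx, Pi.sub_apply, inner_sub_left, mul_sub]
    have d2 : ∀ i, (∫ x, As i x * (inner ℝ ((g - cs i) x) (w x) : ℝ) ∂μ)
        = (∫ x, As i x * (inner ℝ (g x) (w x) : ℝ) ∂μ)
          - ∫ x, As i x * (inner ℝ (cs i x) (w x) : ℝ) ∂μ := fun i => by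
      rw [← integral_sub (IAs i g w) (IAs i (cs i) w)]
      refine integral_congr_ae ?_
      filter_upwards [Lp.coeFn_sub g (cs i)] with x hx
      rw [hx, Pi.sub_apply, inner_sub_left, mul_sub]
    have d2' : (∑ i, μs i * ∫ x, As i x * (inner ℝ ((g - cs i) x) (w x) : ℝ) ∂μ)
        = ∑ i, μs i * ((∫ x, As i x * (inner ℝ (g x) (w x) : ℝ) ∂μ)
            - ∫ x, As i x * (inner ℝ (cs i x) (w x) : ℝ) ∂μ) :=
      Finset.sum_congr rfl fun i _ => by rw [d2 i]
    rw [d1, hJ w, hK w, d2']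
    simp only [mul_sub, Finset.sum_sub_distrib]
    try ring
  -- Cauchy–Schwarz bounds
  have hEnn : 0 ≤ E := by rw [hE]; exact Real.sqrt_nonneg _
  set NW : ℝ := Real.sqrt (∫ x, ‖Real.sqrt (A x) • w x‖ ^ 2 ∂μ) with hNW
  have hNWnn : 0 ≤ NW := Real.sqrt_nonneg _
  have hCS1 : |∫ x, (inner ℝ (hfun x) (Real.sqrt (A x) • w x) : ℝ) ∂μ| ≤ E * NW := by
    rw [hE, hNW]; exact aux_cs mh (mw' w)
  set NZ : ℝ := Real.sqrt (∫ x, ‖Real.sqrt (A x) • z x‖ ^ 2 ∂μ) with hNZ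
  have hNZnn : 0 ≤ NZ := Real.sqrt_nonneg _
  have hIz : (0:ℝ) ≤ ∫ x, ‖Real.sqrt (A x) • z x‖ ^ 2 ∂μ :=
    integral_nonneg fun x => by positivity
  have hNZsq : NZ ^ 2 = ∫ x, ‖Real.sqrt (A x) • z x‖ ^ 2 ∂μ := Real.sq_sqrt hIz
  have hzz : (∫ x, ‖Real.sqrt (A x) • z x‖ ^ 2 ∂μ)
      = - ∫ x, (inner ℝ (hfun x) (Real.sqrt (A x) • z x) : ℝ) ∂μ := by
    have h1 : (∫ x, ‖Real.sqrt (A x) • z x‖ ^ 2 ∂μ)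
        = ∫ x, A x * (inner ℝ (z x) (z x) : ℝ) ∂μ := by
      refine integral_congr_ae ?_
      filter_upwards [hAbd] with x hx
      rw [norm_smul, Real.norm_eq_abs, abs_of_nonneg (Real.sqrt_nonneg _), mul_pow,
        Real.sq_sqrt (le_trans hα.le hx.1), real_inner_self_eq_norm_sq]
    have h4 := hc z hzW
    have h5 : ∀ i, (∫ x, As i x * (inner ℝ (cs i x) (z x) : ℝ) ∂μ)
        = ∫ x, As i x * (inner ℝ (g x) (z x) : ℝ) ∂μ := fun i => hcs i z hzW
    have h5' : (∑ i, μs i * ∫ x, As i x * (inner ℝ (cs i x) (z x) : ℝ) ∂μ)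
        = ∑ i, μs i * ∫ x, As i x * (inner ℝ (g x) (z x) : ℝ) ∂μ :=
      Finset.sum_congr rfl fun i _ => by rw [h5 i]
    rw [h1, hK z, h4, hJ z, h5']
    ring
  have hCSz : |∫ x, (inner ℝ (hfun x) (Real.sqrt (A x) • z x) : ℝ) ∂μ| ≤ E * NZ := by
    rw [hE, hNZ]; exact aux_cs mh (mw' z)
  have hNZle : NZ ≤ E := by
    have h6 : NZ ^ 2 ≤ E * NZ := by
      rw [hNZsq, hzz]
      exact (neg_le_abs _).trans hCSz
    by_contra hcon
    push_neg at hcon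
    nlinarith
  have hWnorm : Real.sqrt (∫ x, A x * ‖w x‖ ^ 2 ∂μ) = NW := by
    rw [hNW]
    congr 1
    refine integral_congr_ae ?_
    filter_upwards [hAbd] with x hx
    rw [norm_smul, Real.norm_eq_abs, abs_of_nonneg (Real.sqrt_nonneg _), mul_pow,
      Real.sq_sqrt (le_trans hα.le hx.1)]
  have hCS2 : |∫ x, A x * (inner ℝ (z x) (w x) : ℝ) ∂μ| ≤ NZ * NW := by
    have h7 : (∫ x, A x * (inner ℝ (z x) (w x) : ℝ) ∂μ)
        = ∫ x, (inner ℝ (Real.sqrt (A x) • z x) (Real.sqrt (A x) • w x) : ℝ) ∂μ := by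
      refine integral_congr_ae ?_
      filter_upwards [hAbd] with x hx
      rw [real_inner_smul_left, real_inner_smul_right, ← mul_assoc,
        Real.mul_self_sqrt (le_trans hα.le hx.1)]
    rw [h7, hNZ, hNW]
    exact aux_cs (mw' z) (mw' w)
  rw [hWnorm, hD]
  calc |(∫ x, (inner ℝ (hfun x) (Real.sqrt (A x) • w x) : ℝ) ∂μ)
        + ∫ x, A x * (inner ℝ (z x) (w x) : ℝ) ∂μ|
      ≤ |∫ x, (inner ℝ (hfun x) (Real.sqrt (A x) • w x) : ℝ) ∂μ|
        + |∫ x, A x * (inner ℝ (z x) (w x) : ℝ) ∂μ| := abs_add_le _ _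
    _ ≤ E * NW + NZ * NW := add_le_add hCS1 hCS2
    _ ≤ 2 * E * NW := by nlinarith
end
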